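/- arXiv:1008.3190 — 5 statements merged into one kernel-verified Lean document; each statement's English description precedes it below -/
import Mathlib

section
/- Every tree T with ℓ ≥ 2 leaves has a covering by ⌈ℓ/2⌉ paths that all share a common vertex. -/
open SimpleGraph Walk

namespace PCAux

set_option linter.unusedSectionVars false
variable {V : Type*} [Fintype V] [DecidableEq V] {G : SimpleGraph V}

section Tree
variable (hT : G.IsTree)
include hT

/-- the unique path between two vertices of a tree -/
noncomputable def P (v w : V) : G.Walk v w := (hT.existsUnique_path v w).choose

lemma P_isPath (v w : V) : (P hT v w).IsPath := (hT.existsUnique_path v w).choose_spec.1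

lemma P_unique {v w : V} {p : G.Walk v w} (hp : p.IsPath) : p = P hT v w :=
  (hT.existsUnique_path v w).choose_spec.2 p hp

lemma length_P (v w : V) : (P hT v w).length = G.dist v w := by
  refine le_antisymm ?_ (SimpleGraph.dist_le _)
  obtain ⟨q, hq⟩ := hT.isConnected.exists_walk_length_eq_dist v w
  calc (P hT v w).length = q.bypass.length := by rw [P_unique hT q.bypass_isPath]
    _ ≤ q.length := q.length_bypass_le
    _ = G.dist v w := hq

/-- distance splits along the unique path -/
lemma dist_split {v x w : V} (hw : w ∈ (P hT v x).support) :
    G.dist v x = G.dist v w + G.dist w x := by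
  have h1 : ((P hT v x).takeUntil w hw) = P hT v w :=
    P_unique hT ((P_isPath hT v x).takeUntil hw)
  have h2 : ((P hT v x).dropUntil w hw) = P hT w x :=
    P_unique hT ((P_isPath hT v x).dropUntil hw)
  have h3 := congrArg Walk.length ((P hT v x).take_spec hw)
  rw [Walk.length_append, h1, h2, length_P, length_P, length_P] at h3
  exact h3.symm

/-- second vertex of the unique path -/
noncomputable def stp (v w : V) : V := (P hT v w).getVert 1

lemma dist_pos_of_ne {v w : V} (h : v ≠ w) : 0 < G.dist v w := by
  rcases Nat.eq_zero_or_pos (G.dist v w) with h0 | h0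
  · exact absurd (Walk.eq_of_length_eq_zero ((length_P hT v w).trans h0)) h
  · exact h0

lemma P_eq_cons {v w : V} (h : v ≠ w) :
    ∃ (q : G.Walk (stp hT v w) w) (ha : G.Adj v (stp hT v w)),
      P hT v w = Walk.cons ha q := by
  obtain ⟨x, ha, q, hq⟩ := Walk.exists_eq_cons_of_ne h (P hT v w)
  have hx : stp hT v w = x := by rw [stp, hq, Walk.getVert_cons_succ, Walk.getVert_zero]
  subst hx
  exact ⟨q, ha, hq⟩

lemma adj_stp {v w : V} (h : v ≠ w) : G.Adj v (stp hT v w) :=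
  (P_eq_cons hT h).choose_spec.choose

lemma dist_stp {v w : V} (h : v ≠ w) : G.dist (stp hT v w) w + 1 = G.dist v w := by
  obtain ⟨q, ha, hq⟩ := P_eq_cons hT h
  have hqp : q = P hT (stp hT v w) w :=
    P_unique hT (by have := P_isPath hT v w; rw [hq] at this; exact this.of_cons)
  have := congrArg Walk.length hq
  rw [Walk.length_cons, length_P, hqp, length_P] at this
  omega

lemma stp_mem_support {v w : V} (h : v ≠ w) : stp hT v w ∈ (P hT v w).support := by
  obtain ⟨q, ha, hq⟩ := P_eq_cons hT h
  rw [hq, Walk.support_cons]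
  exact List.mem_cons_of_mem _ q.start_mem_support

/-- uniqueness of the step vertex -/
lemma stp_unique {v w n : V} (hvw : v ≠ w) (ha : G.Adj v n)
    (hd : G.dist n w + 1 = G.dist v w) : n = stp hT v w := by
  have hv : v ∉ (P hT n w).support := by
    intro hv
    have := dist_split hT hv
    have h1 : 0 < G.dist n v := dist_pos_of_ne hT ha.ne.symm
    omega
  have hpath : (Walk.cons ha (P hT n w)).IsPath := (P_isPath hT n w).cons hv
  have := P_unique hT hpath
  rw [stp, ← this, Walk.getVert_cons_succ, Walk.getVert_zero]

/-- if `w ≠ v` lies on the unique path from `v` to `x`, the first steps agree -/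
lemma stp_eq_of_mem {v x w : V} (hvx : v ≠ x) (hw : w ∈ (P hT v x).support)
    (hwv : w ≠ v) : stp hT v w = stp hT v x := by
  obtain ⟨q, ha, hq⟩ := P_eq_cons hT hvx
  have hqp : q = P hT (stp hT v x) x :=
    P_unique hT (by have := P_isPath hT v x; rw [hq] at this; exact this.of_cons)
  have hwq : w ∈ q.support := by
    rw [hq, Walk.support_cons] at hw
    rcases List.mem_cons.mp hw with h | h
    · exact absurd h hwv
    · exact h
  have h1 : G.dist (stp hT v x) x = G.dist (stp hT v x) w + G.dist w x :=
    dist_split hT (hqp ▸ hwq)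
  have h2 : G.dist v x = G.dist v w + G.dist w x := dist_split hT hw
  have h3 : G.dist (stp hT v x) x + 1 = G.dist v x := dist_stp hT hvx
  have h4 : G.dist (stp hT v x) w + 1 = G.dist v w := by omega
  exact (stp_unique hT (Ne.symm hwv) ha h4).symm

/-- the two branches of distance change across a vertex step -/
lemma dist_of_ne_stp {v n x : V} (ha : G.Adj v n) (hx : x ≠ v)
    (hne : stp hT v x ≠ n) : G.dist n x = G.dist v x + 1 := by
  have hvx : v ≠ x := fun h => hx h.symm
  have hub : G.dist n x ≤ G.dist v x + 1 := by
    have := SimpleGraph.dist_le (Walk.cons ha.symm (P hT v x))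
    rw [Walk.length_cons, length_P] at this
    omega
  have hlb : G.dist v x ≤ G.dist n x + 1 := by
    have := SimpleGraph.dist_le (Walk.cons ha (P hT n x))
    rw [Walk.length_cons, length_P] at this
    omega
  rcases Nat.lt_trichotomy (G.dist n x) (G.dist v x) with h | h | h
  · exfalso
    have hdx : G.dist n x + 1 = G.dist v x := by omega
    exact hne (stp_unique hT hvx ha hdx).symm
  · exfalso
    -- equal distances: build two distinct paths from v to x
    have hvmem : v ∉ (P hT n x).support := by
      intro hv
      have := dist_split hT hv
      have h1 : 0 < G.dist n v := dist_pos_of_ne hT ha.ne.symm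
      omega
    have hpath : (Walk.cons ha (P hT n x)).IsPath := (P_isPath hT n x).cons hvmem
    have heq := P_unique hT hpath
    have := congrArg Walk.length heq
    rw [Walk.length_cons, length_P, length_P] at this
    omega
  · omega

lemma dist_adj_cases {v a b : V} (h : G.Adj a b) :
    G.dist v b = G.dist v a + 1 ∨ G.dist v a = G.dist v b + 1 := by
  by_cases hva : v = a
  · subst hva
    left
    rw [SimpleGraph.dist_self, zero_add, SimpleGraph.dist_eq_one_iff_adj]
    exact h
  · by_cases hstp : stp hT a v = b
    · right
      have h1 := dist_stp hT (fun hh => hva hh.symm : a ≠ v)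
      rw [hstp] at h1
      have c1 : G.dist v a = G.dist a v := SimpleGraph.dist_comm
      have c2 : G.dist v b = G.dist b v := SimpleGraph.dist_comm
      omega
    · left
      have h1 := dist_of_ne_stp hT h (fun hh => hva hh : v ≠ a) hstp
      have c1 : G.dist v a = G.dist a v := SimpleGraph.dist_comm
      have c2 : G.dist v b = G.dist b v := SimpleGraph.dist_comm
      omega

/-- paths from `v` with different first steps meet only at `v` -/
lemma meet_eq_start {v x y w : V} (hx : x ≠ v) (hy : y ≠ v)
    (hst : stp hT v x ≠ stp hT v y)
    (hwx : w ∈ (P hT v x).support) (hwy : w ∈ (P hT v y).support) : w = v := by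
  by_contra hwv
  have h1 := stp_eq_of_mem hT (Ne.symm hx) hwx hwv
  have h2 := stp_eq_of_mem hT (Ne.symm hy) hwy hwv
  exact hst (h1 ▸ h2 ▸ rfl)

lemma P_reverse (v x : V) : P hT x v = (P hT v x).reverse :=
  (P_unique hT ((P_isPath hT v x).reverse)).symm

end Tree

section Deg

lemma isPath_concat {u v w : V} {p : G.Walk u v} (hp : p.IsPath) (h : G.Adj v w)
    (hw : w ∉ p.support) : (p.concat h).IsPath := by
  rw [← Walk.isPath_reverse_iff, Walk.reverse_concat]
  exact (hp.reverse).cons (by rwa [Walk.support_reverse, List.mem_reverse])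

lemma neighborSet_toSubgraph_not_mem {u v w : V} (p : G.Walk u v)
    (hw : w ∉ p.support) : p.toSubgraph.neighborSet w = ∅ := by
  ext z
  simp only [Subgraph.mem_neighborSet, Set.mem_empty_iff_false, iff_false]
  intro hadj
  exact hw (p.mem_verts_toSubgraph.mp hadj.fst_mem)

lemma neighborSet_subgraphOfAdj {a b w : V} (h : G.Adj a b) :
    (G.subgraphOfAdj h).neighborSet w =
      if w = a then {b} else if w = b then {a} else ∅ := by
  ext z
  by_cases hwa : w = a <;> by_cases hwb : w = b <;>
    simp_all [Subgraph.mem_neighborSet, subgraphOfAdj_adj, Sym2.eq_iff] <;> tauto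

lemma deg_toSubgraph (u v : V) (p : G.Walk u v) (hp : p.IsPath) :
    (∀ w, (p.toSubgraph.neighborSet w).ncard ≤ 2) ∧
      (p.toSubgraph.neighborSet u).ncard ≤ 1 := by
  induction p with
  | nil =>
    constructor <;> intros <;>
      simp [Walk.toSubgraph, neighborSet_singletonSubgraph]
  | @cons a c b h q ih =>
    have hq : q.IsPath := hp.of_cons
    have hna : a ∉ q.support := by
      have := hp.support_nodup
      rw [Walk.support_cons] at this
      exact (List.nodup_cons.mp this).1
    obtain ⟨ih2, ihstart⟩ := ih hq
    have hac : a ≠ c := h.ne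
    have key : ∀ w, (Walk.cons h q).toSubgraph.neighborSet w =
        (G.subgraphOfAdj h).neighborSet w ∪ q.toSubgraph.neighborSet w := by
      intro w
      simp [Walk.toSubgraph, Subgraph.neighborSet_sup]
    constructor
    · intro w
      rw [key w, neighborSet_subgraphOfAdj]
      by_cases hwa : w = a
      · subst hwa
        rw [neighborSet_toSubgraph_not_mem q hna]
        simp [hac]
      · by_cases hwc : w = c
        · subst hwc
          simp only [if_neg hwa, if_pos rfl]
          calc ({a} ∪ q.toSubgraph.neighborSet w).ncard
              ≤ ({a} : Set V).ncard + (q.toSubgraph.neighborSet w).ncard :=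
                Set.ncard_union_le _ _
            _ ≤ 1 + 1 := by
                have := ihstart
                simp only [Set.ncard_singleton]
                omega
            _ = 2 := rfl
        · simp only [if_neg hwa, if_neg hwc, Set.empty_union]
          exact ih2 w
    · rw [key a, neighborSet_subgraphOfAdj, if_pos rfl,
        neighborSet_toSubgraph_not_mem q hna]
      simp

end Deg

section Pairing

variable {α β : Type*} [DecidableEq α] [DecidableEq β]

/-- Given a finite nonempty set `S` with all fibers of `f` of size at most `k` and
`|S| ≤ 2k`, we can cover `S` by `k` "pairs", each of which is either degenerate or
crosses two distinct fibers. -/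
lemma pairing (k : ℕ) (S : Finset α) (f : α → β) (hne : S.Nonempty)
    (hfib : ∀ b : β, (S.filter (fun a => f a = b)).card ≤ k)
    (hcard : S.card ≤ 2 * k) :
    ∃ g : Fin k → α × α,
      (∀ i, (g i).1 ∈ S ∧ (g i).2 ∈ S ∧ ((g i).1 = (g i).2 ∨ f (g i).1 ≠ f (g i).2)) ∧
      ∀ s ∈ S, ∃ i, s = (g i).1 ∨ s = (g i).2 := by
  induction k generalizing S with
  | zero =>
    exfalso
    have := Finset.card_pos.mpr hne
    omega
  | succ k ih =>
    by_cases hsmall : S.card ≤ k + 1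
    · -- cover by degenerate pairs via the list of elements
      obtain ⟨a0, ha0⟩ := hne
      set l := S.toList with hl
      have hlen : l.length = S.card := S.length_toList
      refine ⟨fun i => if h : (i : ℕ) < l.length then (l.get ⟨i, h⟩, l.get ⟨i, h⟩)
        else (a0, a0), ?_, ?_⟩
      · intro i
        by_cases h : (i : ℕ) < l.length
        · have hmem : l.get ⟨i, h⟩ ∈ S := by
            rw [← Finset.mem_toList]
            exact l.get_mem _
          simp only [dif_pos h]
          refine ⟨hmem, hmem, ?_⟩
          left
          trivial
        · simp only [dif_neg h]
          refine ⟨ha0, ha0, ?_⟩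
          left
          trivial
      · intro s hs
        have : s ∈ l := Finset.mem_toList.mpr hs
        obtain ⟨j, hj⟩ := List.mem_iff_get.mp this
        have hjk : (j : ℕ) < k + 1 := by
          have := j.isLt
          omega
        refine ⟨⟨j, hjk⟩, ?_⟩
        simp only
        rw [dif_pos (by simpa using j.isLt : ((⟨(j:ℕ), hjk⟩ : Fin (k+1)) : ℕ) < l.length)]
        left
        rw [← hj]
    · -- S.card ≥ k + 2 : pick a in a largest fiber, b in a largest other fiber
      push_neg at hsmall
      obtain ⟨a, haS, hamax⟩ := S.exists_max_image
        (fun a => (S.filter (fun x => f x = f a)).card) hne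
      have hTne : (S.filter (fun x => f x ≠ f a)).Nonempty := by
        rw [Finset.filter_nonempty_iff]
        by_contra hcon
        push_neg at hcon
        have hsub : S ⊆ S.filter (fun x => f x = f a) := by
          intro x hx
          rw [Finset.mem_filter]
          exact ⟨hx, hcon x hx⟩
        have := Finset.card_le_card hsub
        have := hfib (f a)
        omega
      obtain ⟨b, hbT, hbmax⟩ := (S.filter (fun x => f x ≠ f a)).exists_max_image
        (fun c => ((S.filter (fun x => f x ≠ f a)).filter (fun x => f x = f c)).card) hTne
      rw [Finset.mem_filter] at hbT
      obtain ⟨hbS, hfba⟩ := hbT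
      have hab : a ≠ b := fun h => hfba (by rw [h])
      set S' := (S.erase a).erase b with hS'
      have hS'card : S'.card = S.card - 2 := by
        rw [hS', Finset.card_erase_of_mem (Finset.mem_erase.mpr ⟨Ne.symm hab, hbS⟩),
          Finset.card_erase_of_mem haS]
        omega
      by_cases hS'ne : S'.Nonempty
      · -- recurse
        have hfib' : ∀ c : β, (S'.filter (fun x => f x = c)).card ≤ k := by
          intro c
          by_cases hca : c = f a
          · subst hca
            have hsub : S'.filter (fun x => f x = f a) ⊆
                (S.filter (fun x => f x = f a)).erase a := by
              intro x hx
              rw [Finset.mem_filter] at hx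
              rw [Finset.mem_erase, Finset.mem_filter]
              have hxS' := hx.1
              rw [hS', Finset.mem_erase, Finset.mem_erase] at hxS'
              exact ⟨hxS'.2.1, hxS'.2.2, hx.2⟩
            have h1 := Finset.card_le_card hsub
            have h2 := Finset.card_erase_of_mem
              (Finset.mem_filter.mpr ⟨haS, rfl⟩ :
                a ∈ S.filter (fun x => f x = f a))
            have := hfib (f a)
            omega
          · by_cases hcb : c = f b
            · subst hcb
              have hsub : S'.filter (fun x => f x = f b) ⊆
                  (S.filter (fun x => f x = f b)).erase b := by
                intro x hx
                rw [Finset.mem_filter] at hx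
                rw [Finset.mem_erase, Finset.mem_filter]
                have hxS' := hx.1
                rw [hS', Finset.mem_erase, Finset.mem_erase] at hxS'
                exact ⟨hxS'.1, hxS'.2.2, hx.2⟩
              have h1 := Finset.card_le_card hsub
              have h2 := Finset.card_erase_of_mem
                (Finset.mem_filter.mpr ⟨hbS, rfl⟩ :
                  b ∈ S.filter (fun x => f x = f b))
              have := hfib (f b)
              omega
            · -- third fiber: if it had k+1 elements, |S| ≥ 3(k+1), contradiction
              by_contra hcon
              push_neg at hcon
              have hcc : (S'.filter (fun x => f x = c)).card = k + 1 := by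
                have h1 : S'.filter (fun x => f x = c) ⊆ S.filter (fun x => f x = c) := by
                  intro x hx
                  rw [Finset.mem_filter] at hx ⊢
                  have hxS' := hx.1
                  rw [hS', Finset.mem_erase, Finset.mem_erase] at hxS'
                  exact ⟨hxS'.2.2, hx.2⟩
                have := Finset.card_le_card h1
                have := hfib c
                omega
              -- the c-fiber of S is the same set since a, b not in it
              have hceq : S'.filter (fun x => f x = c) = S.filter (fun x => f x = c) := by
                apply Finset.Subset.antisymm
                · intro x hx
                  rw [Finset.mem_filter] at hx ⊢
                  have hxS' := hx.1
                  rw [hS', Finset.mem_erase, Finset.mem_erase] at hxS'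
                  exact ⟨hxS'.2.2, hx.2⟩
                · intro x hx
                  rw [Finset.mem_filter] at hx ⊢
                  refine ⟨?_, hx.2⟩
                  rw [hS', Finset.mem_erase, Finset.mem_erase]
                  refine ⟨?_, ?_, hx.1⟩
                  · intro hxb; exact hcb (hxb ▸ hx.2).symm
                  · intro hxa; exact hca (hxa ▸ hx.2).symm
              -- pick any x in the c-fiber
              have hcne : (S.filter (fun x => f x = c)).Nonempty := by
                rw [← hceq, ← Finset.card_pos, hcc]; omega
              obtain ⟨x0, hx0⟩ := hcne
              rw [Finset.mem_filter] at hx0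
              -- fiber of a has ≥ k+1 elements
              have hfa : k + 1 ≤ (S.filter (fun x => f x = f a)).card := by
                have h6 := hamax x0 hx0.1
                rw [hx0.2] at h6
                have h7 := congrArg Finset.card hceq
                omega
              -- fiber of b within T has ≥ k+1 elements
              have hfb : k + 1 ≤ (S.filter (fun x => f x = f b)).card := by
                have h1 := hbmax x0 (Finset.mem_filter.mpr ⟨hx0.1, by
                  rw [hx0.2]; intro hc; exact hca hc⟩)
                have h2 : (S.filter (fun x => f x ≠ f a)).filter (fun x => f x = f x0) =
                    S.filter (fun x => f x = c) := by
                  apply Finset.ext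
                  intro y
                  rw [Finset.mem_filter, Finset.mem_filter, Finset.mem_filter, hx0.2]
                  constructor
                  · rintro ⟨⟨h3, _⟩, h4⟩; exact ⟨h3, h4⟩
                  · rintro ⟨h3, h4⟩
                    exact ⟨⟨h3, by rw [h4]; intro hc; exact hca hc⟩, h4⟩
                rw [h2, ← hceq, hcc] at h1
                have h5 : (S.filter (fun x => f x ≠ f a)).filter (fun x => f x = f b) ⊆
                    S.filter (fun x => f x = f b) := by
                  intro y hy
                  rw [Finset.mem_filter] at hy ⊢
                  exact ⟨(Finset.mem_filter.mp hy.1).1, hy.2⟩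
                have := Finset.card_le_card h5
                omega
              -- three pairwise disjoint fibers, contradiction with |S| ≤ 2(k+1)
              have hca' : f a ≠ c := fun h => hca h.symm
              have hcb' : f b ≠ c := fun h => hcb h.symm
              have hd1 : Disjoint (S.filter (fun x => f x = f a))
                  (S.filter (fun x => f x = f b)) := by
                rw [Finset.disjoint_left]
                intro x h1 h2
                rw [Finset.mem_filter] at h1 h2
                exact hfba (h2.2.symm.trans h1.2)
              have hd2 : Disjoint ((S.filter (fun x => f x = f a)) ∪
                  (S.filter (fun x => f x = f b))) (S.filter (fun x => f x = c)) := by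
                rw [Finset.disjoint_left]
                intro x h1 h2
                rw [Finset.mem_union] at h1
                rw [Finset.mem_filter] at h2
                rcases h1 with h1 | h1 <;> rw [Finset.mem_filter] at h1
                · exact hca' (h1.2.symm.trans h2.2)
                · exact hcb' (h1.2.symm.trans h2.2)
              have hsub : ((S.filter (fun x => f x = f a)) ∪
                  (S.filter (fun x => f x = f b))) ∪ (S.filter (fun x => f x = c)) ⊆ S := by
                intro x hx
                rw [Finset.mem_union, Finset.mem_union] at hx
                rcases hx with (hx | hx) | hx <;> exact (Finset.mem_filter.mp hx).1
              have hc1 := Finset.card_union_of_disjoint hd1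
              have hc2 := Finset.card_union_of_disjoint hd2
              have hc3 := Finset.card_le_card hsub
              rw [hc1] at hc2
              rw [hc2] at hc3
              rw [← hceq, hcc] at hc3
              omega
        have hS'card2 : S'.card ≤ 2 * k := by omega
        obtain ⟨g', hg1, hg2⟩ := ih S' hS'ne hfib' hS'card2
        have hS'S : S' ⊆ S := fun x hx =>
          Finset.mem_of_mem_erase (Finset.mem_of_mem_erase hx)
        refine ⟨fun i => Fin.cases (a, b) g' i, ?_, ?_⟩
        · intro i
          induction i using Fin.cases with
          | zero => simpa using ⟨haS, hbS, Or.inr (Ne.symm hfba)⟩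
          | succ j =>
            have := hg1 j
            simpa using ⟨hS'S this.1, hS'S this.2.1, this.2.2⟩
        · intro s hs
          by_cases hsa : s = a
          · exact ⟨0, by simp [hsa]⟩
          · by_cases hsb : s = b
            · exact ⟨0, by simp [hsb]⟩
            · have hsS' : s ∈ S' := by
                rw [hS', Finset.mem_erase, Finset.mem_erase]
                exact ⟨hsb, hsa, hs⟩
              obtain ⟨j, hj⟩ := hg2 s hsS'
              exact ⟨j.succ, by simpa using hj⟩
      · -- S' empty : S = {a, b}
        have hScard : S.card = 2 := by
          have h0 : S'.card = 0 := by
            rw [Finset.card_eq_zero]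
            exact Finset.not_nonempty_iff_eq_empty.mp hS'ne
          omega
        refine ⟨fun _ => (a, b), fun i => ⟨haS, hbS, Or.inr (Ne.symm hfba)⟩, ?_⟩
        intro s hs
        refine ⟨0, ?_⟩
        by_contra hcon
        push_neg at hcon
        have : S' ≠ ∅ := by
          rw [hS']
          intro hemp
          have hsS' : s ∈ (S.erase a).erase b :=
            Finset.mem_erase.mpr ⟨hcon.2, Finset.mem_erase.mpr ⟨hcon.1, hs⟩⟩
          rw [hemp] at hsS'
          exact absurd hsS' (Finset.notMem_empty s)
        exact this (Finset.not_nonempty_iff_eq_empty.mp hS'ne)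

end Pairing

section Centroid
variable (hT : G.IsTree)
include hT

/-- at a vertex minimizing total distance to `Lf`, each branch holds at most half of `Lf` -/
lemma centroid_fiber_bound (Lf : Finset V) (v : V)
    (hmin : ∀ u : V, ∑ x ∈ Lf, G.dist v x ≤ ∑ x ∈ Lf, G.dist u x)
    (n : V) (hadj : G.Adj v n) :
    2 * (Lf.filter (fun x => x ≠ v ∧ stp hT v x = n)).card ≤ Lf.card := by
  have hAdist : ∀ x ∈ Lf.filter (fun x => x ≠ v ∧ stp hT v x = n),
      G.dist n x + 1 = G.dist v x := by
    intro x hx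
    rw [Finset.mem_filter] at hx
    have := dist_stp hT (Ne.symm hx.2.1)
    rw [hx.2.2] at this
    exact this
  have hBdist : ∀ x ∈ Lf.filter (fun x => ¬ (x ≠ v ∧ stp hT v x = n)),
      G.dist n x = G.dist v x + 1 := by
    intro x hx
    rw [Finset.mem_filter] at hx
    by_cases hxv : x = v
    · subst hxv
      rw [SimpleGraph.dist_self]
      have : G.dist n x = 1 := SimpleGraph.dist_eq_one_iff_adj.mpr hadj.symm
      omega
    · have hstp : stp hT v x ≠ n := fun hc => hx.2 ⟨hxv, hc⟩
      exact dist_of_ne_stp hT hadj hxv hstp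
  have hsplit1 : ∑ x ∈ Lf, G.dist n x
      = ∑ x ∈ Lf.filter (fun x => x ≠ v ∧ stp hT v x = n), G.dist n x
        + ∑ x ∈ Lf.filter (fun x => ¬ (x ≠ v ∧ stp hT v x = n)), G.dist n x :=
    (Finset.sum_filter_add_sum_filter_not Lf _ _).symm
  have hsplit2 : ∑ x ∈ Lf, G.dist v x
      = ∑ x ∈ Lf.filter (fun x => x ≠ v ∧ stp hT v x = n), G.dist v x
        + ∑ x ∈ Lf.filter (fun x => ¬ (x ≠ v ∧ stp hT v x = n)), G.dist v x :=
    (Finset.sum_filter_add_sum_filter_not Lf _ _).symm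
  have hA : ∑ x ∈ Lf.filter (fun x => x ≠ v ∧ stp hT v x = n), G.dist n x
        + (Lf.filter (fun x => x ≠ v ∧ stp hT v x = n)).card
      = ∑ x ∈ Lf.filter (fun x => x ≠ v ∧ stp hT v x = n), G.dist v x := by
    rw [Finset.card_eq_sum_ones, ← Finset.sum_add_distrib]
    exact Finset.sum_congr rfl hAdist
  have hB : ∑ x ∈ Lf.filter (fun x => ¬ (x ≠ v ∧ stp hT v x = n)), G.dist n x
      = ∑ x ∈ Lf.filter (fun x => ¬ (x ≠ v ∧ stp hT v x = n)), G.dist v x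
        + (Lf.filter (fun x => ¬ (x ≠ v ∧ stp hT v x = n))).card := by
    rw [Finset.card_eq_sum_ones, ← Finset.sum_add_distrib]
    exact Finset.sum_congr rfl hBdist
  have hcards := Finset.card_filter_add_card_filter_not
    (s := Lf) (p := fun x => x ≠ v ∧ stp hT v x = n)
  have hmn := hmin n
  omega

end Centroid
end PCAux

/-- A subgraph is a *path subgraph* if it is connected and has maximum degree at most 2. -/
def IsPathSubgraph {V : Type*} {G : SimpleGraph V} (H : G.Subgraph) : Prop :=
  H.Connected ∧ ∀ v : V, (H.neighborSet v).ncard ≤ 2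

open PCAux

/-- Every tree `T` with `ℓ ≥ 2` leaves has a covering by `⌈ℓ/2⌉`
paths that all share a common vertex. -/
theorem pathCover_common_vertex {V : Type*} [Fintype V] (G : SimpleGraph V)
    (hT : G.IsTree) (ℓ : ℕ)
    (hℓ : ℓ = {v : V | (G.neighborSet v).ncard = 1}.ncard) (hℓ2 : 2 ≤ ℓ) :
    ∃ F : Fin ((ℓ + 1) / 2) → G.Subgraph,
      (∀ i, IsPathSubgraph (F i)) ∧
      (∀ e ∈ G.edgeSet, ∃ i, e ∈ (F i).edgeSet) ∧
      ∃ v : V, ∀ i, v ∈ (F i).verts := by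
  classical
  have hLfin : {v : V | (G.neighborSet v).ncard = 1}.Finite := Set.toFinite _
  set Lf := hLfin.toFinset with hLfdef
  have hLcard : Lf.card = ℓ := by
    rw [hℓ, Set.ncard_eq_toFinset_card _ hLfin]
  have hLne : Lf.Nonempty := Finset.card_pos.mp (by omega)
  -- centroid: minimizer of total distance to leaves
  obtain ⟨v, -, hvmin⟩ := Finset.exists_min_image Finset.univ
    (fun u => ∑ x ∈ Lf, G.dist u x) ⟨hLne.choose, Finset.mem_univ _⟩
  set S := Lf.erase v with hSdef
  have hSsub : S ⊆ Lf := Finset.erase_subset _ _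
  have hScard_le : S.card ≤ ℓ := le_trans (Finset.card_le_card hSsub) hLcard.le
  have hScard_ge : ℓ - 1 ≤ S.card := by
    have h1 := Finset.pred_card_le_card_erase (s := Lf) (a := v)
    have h2 : (Lf.erase v).card = S.card := by rw [hSdef]
    omega
  have hSne : S.Nonempty := Finset.card_pos.mp (by omega)
  -- fiber bounds
  have hfib : ∀ b : V, (S.filter (fun x => stp hT v x = b)).card ≤ (ℓ + 1) / 2 := by
    intro b
    by_cases hadj : G.Adj v b
    · have h2 := centroid_fiber_bound hT Lf v (fun u => hvmin u (Finset.mem_univ u)) b hadj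
      have heq : S.filter (fun x => stp hT v x = b)
          = Lf.filter (fun x => x ≠ v ∧ stp hT v x = b) := by
        ext x
        simp only [Finset.mem_filter, hSdef, Finset.mem_erase]
        tauto
      rw [heq]
      omega
    · have heq : S.filter (fun x => stp hT v x = b) = ∅ := by
        rw [Finset.filter_eq_empty_iff]
        intro x hx
        rw [hSdef, Finset.mem_erase] at hx
        intro hc
        exact hadj (hc ▸ adj_stp hT (Ne.symm hx.1))
      rw [heq]
      simp
  have hcard2 : S.card ≤ 2 * ((ℓ + 1) / 2) := by omega
  obtain ⟨g, hg1, hg2⟩ := pairing ((ℓ + 1) / 2) S (fun x => stp hT v x) hSne hfib hcard2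
  refine ⟨fun i => (P hT v (g i).1).toSubgraph ⊔ (P hT v (g i).2).toSubgraph, ?_, ?_, ?_⟩
  · -- each piece is a path subgraph
    intro i
    obtain ⟨hx, hy, hcase⟩ := hg1 i
    constructor
    · refine Subgraph.connected_sup (Walk.toSubgraph_connected _).preconnected
        (Walk.toSubgraph_connected _).preconnected ⟨v, ?_⟩
      rw [Subgraph.verts_inf]
      exact ⟨Walk.start_mem_verts_toSubgraph _, Walk.start_mem_verts_toSubgraph _⟩
    · intro w
      have hdeg1 := deg_toSubgraph v (g i).1 (P hT v (g i).1) (P_isPath hT v (g i).1)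
      have hdeg2 := deg_toSubgraph v (g i).2 (P hT v (g i).2) (P_isPath hT v (g i).2)
      have hnbr : ((P hT v (g i).1).toSubgraph ⊔ (P hT v (g i).2).toSubgraph).neighborSet w
          = (P hT v (g i).1).toSubgraph.neighborSet w
            ∪ (P hT v (g i).2).toSubgraph.neighborSet w :=
        Subgraph.neighborSet_sup _
      rw [hnbr]
      rcases hcase with heq | hne
      · -- degenerate pair
        rw [show (g i).1 = (g i).2 from heq, Set.union_self]
        exact hdeg2.1 w
      · -- genuinely crossing pair
        have hxv : (g i).1 ≠ v := (Finset.mem_erase.mp (hSdef ▸ hx)).1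
        have hyv : (g i).2 ≠ v := (Finset.mem_erase.mp (hSdef ▸ hy)).1
        by_cases hwx : w ∈ (P hT v (g i).1).support
        · by_cases hwy : w ∈ (P hT v (g i).2).support
          · have hwv : w = v := meet_eq_start hT hxv hyv hne hwx hwy
            rw [hwv]
            calc ((P hT v (g i).1).toSubgraph.neighborSet v
                  ∪ (P hT v (g i).2).toSubgraph.neighborSet v).ncard
                ≤ ((P hT v (g i).1).toSubgraph.neighborSet v).ncard
                  + ((P hT v (g i).2).toSubgraph.neighborSet v).ncard :=
                  Set.ncard_union_le _ _
              _ ≤ 2 := by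
                  have := hdeg1.2
                  have := hdeg2.2
                  omega
          · rw [neighborSet_toSubgraph_not_mem _ hwy, Set.union_empty]
            exact hdeg1.1 w
        · rw [neighborSet_toSubgraph_not_mem _ hwx, Set.empty_union]
          exact hdeg2.1 w
  · -- edge covering
    have main : ∀ a b : V, G.Adj a b → G.dist v b = G.dist v a + 1 →
        ∃ i : Fin ((ℓ + 1) / 2),
          s(a, b) ∈ ((P hT v (g i).1).toSubgraph ⊔ (P hT v (g i).2).toSubgraph).edgeSet := by
      intro a b hab hd
      -- choose a farthest vertex whose path from v contains b
      obtain ⟨x, hxT, hxmax⟩ := Finset.exists_max_image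
        (Finset.univ.filter (fun x => b ∈ (P hT v x).support)) (fun x => G.dist v x)
        ⟨b, Finset.mem_filter.mpr ⟨Finset.mem_univ _, (P hT v b).end_mem_support⟩⟩
      have hbx : b ∈ (P hT v x).support := (Finset.mem_filter.mp hxT).2
      have hdvb : G.dist v b ≤ G.dist v x := by
        have hsplit := dist_split hT hbx
        omega
      have hxv : x ≠ v := by
        intro hc
        subst hc
        rw [SimpleGraph.dist_self] at hdvb
        omega
      -- x is a leaf
      have hnb : G.neighborSet x = {stp hT x v} := by
        ext y
        simp only [mem_neighborSet, Set.mem_singleton_iff]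
        constructor
        · intro hy
          by_cases hys : y ∈ (P hT v x).support
          · have hyx : y ≠ x := fun hc => G.irrefl (hc ▸ hy)
            have h1 : stp hT x y = stp hT x v := by
              apply stp_eq_of_mem hT hxv _ hyx
              rw [P_reverse hT v x, Walk.support_reverse, List.mem_reverse]
              exact hys
            have h2 : y = stp hT x y := by
              apply stp_unique hT hy.ne hy
              rw [SimpleGraph.dist_self, SimpleGraph.dist_eq_one_iff_adj.mpr hy]
            rw [h2, h1]
          · exfalso
            have hpath := isPath_concat (P_isPath hT v x) hy hys
            have hPy : (P hT v x).concat hy = P hT v y := P_unique hT hpath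
            have hyT : y ∈ Finset.univ.filter (fun z => b ∈ (P hT v z).support) := by
              rw [Finset.mem_filter]
              refine ⟨Finset.mem_univ _, ?_⟩
              rw [← hPy, Walk.support_concat, List.mem_append]
              exact Or.inl hbx
            have hle := hxmax y hyT
            have hlen := congrArg Walk.length hPy
            rw [Walk.length_concat, length_P, length_P] at hlen
            omega
        · intro hy
          rw [hy]
          exact adj_stp hT hxv
      have hleaf : x ∈ Lf := by
        rw [hLfdef, Set.Finite.mem_toFinset, Set.mem_setOf_eq, hnb]
        exact Set.ncard_singleton _
      have hxS : x ∈ S := by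
        rw [hSdef, Finset.mem_erase]
        exact ⟨hxv, hleaf⟩
      -- the edge lies on P v x
      have hbv : b ≠ v := by
        intro hc
        subst hc
        rw [SimpleGraph.dist_self] at hd
        omega
      have hbna : b ∉ (P hT v a).support := by
        intro hc
        have := dist_split hT hc
        have hba : 0 < G.dist b a := dist_pos_of_ne hT (Ne.symm hab.ne)
        omega
      have hPb : (P hT v a).concat hab = P hT v b :=
        P_unique hT (isPath_concat (P_isPath hT v a) hab hbna)
      have hmemb : s(a, b) ∈ (P hT v b).edges := by
        rw [← hPb, Walk.edges_concat, List.concat_eq_append, List.mem_append]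
        exact Or.inr (List.mem_singleton_self _)
      have htake : (P hT v x).takeUntil b hbx = P hT v b :=
        P_unique hT ((P_isPath hT v x).takeUntil hbx)
      have hmemx : s(a, b) ∈ (P hT v x).edges := by
        apply Walk.edges_takeUntil_subset (P hT v x) hbx
        rw [htake]
        exact hmemb
      obtain ⟨i, hi⟩ := hg2 x hxS
      refine ⟨i, ?_⟩
      rw [Subgraph.edgeSet_sup]
      rcases hi with hi | hi
      · left
        rw [← hi] at *
        exact (Walk.mem_edges_toSubgraph _).mpr hmemx
      · right
        rw [← hi] at *
        exact (Walk.mem_edges_toSubgraph _).mpr hmemx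
    intro e he
    induction e with
    | _ a b =>
      rw [SimpleGraph.mem_edgeSet] at he
      rcases dist_adj_cases hT (v := v) he with hd | hd
      · exact main a b he hd
      · obtain ⟨i, hi⟩ := main b a he.symm hd
        exact ⟨i, Sym2.eq_swap ▸ hi⟩
  · -- common vertex
    refine ⟨v, fun i => ?_⟩
    rw [Subgraph.verts_sup]
    exact Or.inl (Walk.start_mem_verts_toSubgraph _)
end

section
/- For every integer d ≥ 2 and every tree T with ℓ ≥ 2 leaves, the minimum number of subtrees of T, each having at most d leaves, needed to cover the edge set of T is exactly ⌈ℓ/d⌉. -/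
namespace TreeCoverAux


open List

/-- A strict prefix is lexicographically smaller. -/
theorem lex_of_prefix_ne {α : Type*} [LinearOrder α] :
    ∀ {l1 l2 : List α}, l1 <+: l2 → l1 ≠ l2 → Lex (· < ·) l1 l2
  | [], l2, _, hne => by
      cases l2 with
      | nil => exact absurd rfl hne
      | cons a t => exact Lex.nil
  | a :: t1, l2, hpre, hne => by
      obtain ⟨s, hs⟩ := hpre
      cases l2 with
      | nil => simp at hs
      | cons b t2 =>
        have hab : a = b := by simpa using (congrArg (·.head?) hs.symm).symm
        subst hab
        have ht : t1 <+: t2 := ⟨s, by simpa using hs⟩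
        have htne : t1 ≠ t2 := fun h => hne (by rw [h])
        exact Lex.cons (lex_of_prefix_ne ht htne)

/-- Comparison against lists extending/diverging from a common stem `q`. -/
theorem lex_sameside {α : Type*} [LinearOrder α] :
    ∀ {q s t : List α}, q <+: s → ¬ q <+: t → ¬ t <+: q →
      (Lex (· < ·) t s ↔ Lex (· < ·) t q) ∧ (Lex (· < ·) s t ↔ Lex (· < ·) q t)
  | [], s, t, _, hqt, _ => absurd (nil_prefix) hqt
  | a :: q', s, t, hqs, hqt, htq => by
      obtain ⟨s1, hs1⟩ := hqs
      cases t with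
      | nil => exact absurd (nil_prefix) htq
      | cons b t' =>
        cases s with
        | nil => simp at hs1
        | cons c s' =>
          have hac : a = c := by simpa using congrArg (·.head?) hs1
          subst hac
          rcases lt_trichotomy b a with hba | hba | hba
          · constructor
            · constructor <;> intro _ <;> exact Lex.rel hba
            · constructor <;> intro h
              · exfalso
                cases h with
                | cons h => exact absurd rfl hba.ne'
                | rel h => exact absurd h (lt_asymm hba)
              · exfalso
                cases h with
                | cons h => exact absurd rfl hba.ne'
                | rel h => exact absurd h (lt_asymm hba)
          · subst hba
            have hq's : q' <+: s' := ⟨s1, by simpa using hs1⟩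
            have hq't : ¬ q' <+: t' := fun h => hqt ((List.cons_prefix_cons).2 ⟨rfl, h⟩)
            have ht'q : ¬ t' <+: q' := fun h => htq ((List.cons_prefix_cons).2 ⟨rfl, h⟩)
            have IH := lex_sameside hq's hq't ht'q
            constructor
            · rw [lex_cons_iff, lex_cons_iff]; exact IH.1
            · rw [lex_cons_iff, lex_cons_iff]; exact IH.2
          · constructor
            · constructor <;> intro h
              · exfalso
                cases h with
                | cons h => exact absurd rfl hba.ne
                | rel h => exact absurd h (lt_asymm hba)
              · exfalso
                cases h with
                | cons h => exact absurd rfl hba.ne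
                | rel h => exact absurd h (lt_asymm hba)
            · constructor <;> intro _ <;> exact Lex.rel hba



lemma class_card_le {ℓ k d : ℕ} (hk : 0 < k) (hkd : ℓ ≤ k * d) (i : ℕ) :
    (((Finset.range ℓ).filter (fun j => j % k = i)).card) ≤ d := by
  classical
  have : ∀ j ∈ (Finset.range ℓ).filter (fun j => j % k = i), j / k ∈ Finset.range d := by
    intro j hj
    simp only [Finset.mem_filter, Finset.mem_range] at hj ⊢
    exact Nat.div_lt_of_lt_mul (lt_of_lt_of_le hj.1 hkd)
  have hinj : ∀ j1 ∈ (Finset.range ℓ).filter (fun j => j % k = i),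
      ∀ j2 ∈ (Finset.range ℓ).filter (fun j => j % k = i), j1 / k = j2 / k → j1 = j2 := by
    intro j1 hj1 j2 hj2 h
    simp only [Finset.mem_filter, Finset.mem_range] at hj1 hj2
    have e1 := Nat.div_add_mod j1 k
    have e2 := Nat.div_add_mod j2 k
    rw [hj1.2] at e1
    rw [hj2.2] at e2
    rw [h] at e1
    omega
  simpa using Finset.card_le_card_of_injOn _ this hinj

lemma split_lemma {ℓ k d : ℕ} (hd : 2 ≤ d) (hk : 0 < k) (hkd : ℓ ≤ k * d)
    (I : Set ℕ) (hint : ∀ p q s, p ∈ I → s ∈ I → p ≤ q → q ≤ s → q ∈ I)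
    (hIb : ∀ j ∈ I, j < ℓ) {ρ : ℕ} (hρI : ρ ∉ I) {a₀ : ℕ} (ha₀ : a₀ ∈ I) :
    ∃ i < k, (∃ a, a ∈ I ∧ a % k = i) ∧
      ((∃ b < ℓ, b % k = i ∧ b ∉ I) ∨ ρ % k = i ∨
        (((Finset.range ℓ).filter (fun j => j % k = i)).card) < d) := by
  classical
  set i := a₀ % k with hi
  have hik : i < k := Nat.mod_lt _ hk
  by_cases hb : ∃ b < ℓ, b % k = i ∧ b ∉ I
  · exact ⟨i, hik, ⟨a₀, ha₀, rfl⟩, Or.inl hb⟩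
  · push_neg at hb
    by_cases hcard : (((Finset.range ℓ).filter (fun j => j % k = i)).card) < d
    · exact ⟨i, hik, ⟨a₀, ha₀, rfl⟩, Or.inr (Or.inr hcard)⟩
    · push_neg at hcard
      have hiℓ : i < ℓ := lt_of_le_of_lt (Nat.mod_le _ _) (hIb a₀ ha₀)
      have hiI : i ∈ I := by
        by_contra h
        exact h (hb i hiℓ (Nat.mod_eq_of_lt hik))
      have hikℓ : i + k < ℓ := by
        by_contra h
        push_neg at h
        have hsub : (Finset.range ℓ).filter (fun j => j % k = i) ⊆ {i} := by
          intro j hj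
          simp only [Finset.mem_filter, Finset.mem_range] at hj
          simp only [Finset.mem_singleton]
          rcases Nat.lt_or_ge j k with hjk | hjk
          · rw [Nat.mod_eq_of_lt hjk] at hj; exact hj.2
          · exfalso
            have h1 : 1 ≤ j / k := (Nat.one_le_div_iff hk).2 hjk
            have := Nat.div_add_mod j k
            have : k + i ≤ j := by nlinarith [hj.2]
            omega
        have := Finset.card_le_card hsub
        simp at this
        omega
      have hikI : i + k ∈ I :=
        hb (i + k) hikℓ (by simp [Nat.add_mod, Nat.mod_eq_of_lt hik])
      set y := if i ≤ ρ % k then ρ % k else k + ρ % k with hy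
      have hρk : ρ % k < k := Nat.mod_lt _ hk
      have hyI : y ∈ I := by
        rcases le_or_gt i (ρ % k) with h1 | h1
        · rw [hy, if_pos h1]
          exact hint i (ρ % k) (i + k) hiI hikI h1 (by omega)
        · rw [hy, if_neg (not_le.2 h1)]
          exact hint i (k + ρ % k) (i + k) hiI hikI (by omega) (by omega)
      have hymod : y % k = ρ % k := by
        rcases le_or_gt i (ρ % k) with h1 | h1
        · rw [hy, if_pos h1, Nat.mod_eq_of_lt hρk]
        · rw [hy, if_neg (not_le.2 h1), Nat.add_comm, Nat.add_mod_right, Nat.mod_eq_of_lt hρk]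
      exact ⟨ρ % k, hρk, ⟨y, hyI, hymod⟩, Or.inr (Or.inl rfl)⟩



open SimpleGraph

variable {V : Type*} [Fintype V] [DecidableEq V] {G : SimpleGraph V}

noncomputable def pth (hT : G.IsTree) (u v : V) : G.Walk u v :=
  (hT.existsUnique_path u v).exists.choose

lemma pth_isPath (hT : G.IsTree) (u v : V) : (pth hT u v).IsPath :=
  (hT.existsUnique_path u v).exists.choose_spec

lemma pth_unique (hT : G.IsTree) {u v : V} (p : G.Walk u v) (hp : p.IsPath) :
    p = pth hT u v := by
  obtain ⟨q, hq, huniq⟩ := hT.existsUnique_path u v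
  rw [huniq p hp, huniq _ (pth_isPath hT u v)]

lemma pth_self (hT : G.IsTree) (r : V) : pth hT r r = SimpleGraph.Walk.nil := by
  rw [← pth_unique hT SimpleGraph.Walk.nil (SimpleGraph.Walk.IsPath.nil)]

lemma getVert_injOn_isPath {u v : V} (p : G.Walk u v) (hp : p.IsPath) :
    ∀ i ≤ p.length, ∀ j ≤ p.length, p.getVert i = p.getVert j → i = j := by
  induction p with
  | nil => intro i hi j hj _; simp at hi hj; omega
  | @cons a b c h q ih =>
    rw [SimpleGraph.Walk.cons_isPath_iff] at hp
    intro i hi j hj hij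
    simp only [SimpleGraph.Walk.length_cons] at hi hj
    match i, j with
    | 0, 0 => rfl
    | 0, (j+1) =>
      exfalso
      rw [SimpleGraph.Walk.getVert_zero, SimpleGraph.Walk.getVert_cons_succ] at hij
      exact hp.2 (SimpleGraph.Walk.mem_support_iff_exists_getVert.2 ⟨j, hij.symm, by omega⟩)
    | (i+1), 0 =>
      exfalso
      rw [SimpleGraph.Walk.getVert_zero, SimpleGraph.Walk.getVert_cons_succ] at hij
      exact hp.2 (SimpleGraph.Walk.mem_support_iff_exists_getVert.2 ⟨i, hij, by omega⟩)
    | (i+1), (j+1) =>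
      rw [SimpleGraph.Walk.getVert_cons_succ, SimpleGraph.Walk.getVert_cons_succ] at hij
      have := ih hp.1 i (by omega) j (by omega) hij
      omega

/-- An internal vertex of a path has two distinct neighbours in the path subgraph. -/
lemma internal_two_nbrs {u v : V} (p : G.Walk u v) (hp : p.IsPath) (w : V)
    (hw : w ∈ p.support) (hwu : w ≠ u) (hwv : w ≠ v) :
    ∃ a b, a ≠ b ∧ p.toSubgraph.Adj w a ∧ p.toSubgraph.Adj w b := by
  obtain ⟨i, hiv, hil⟩ := SimpleGraph.Walk.mem_support_iff_exists_getVert.1 hw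
  have hi0 : i ≠ 0 := by
    intro h; subst h; rw [SimpleGraph.Walk.getVert_zero] at hiv; exact hwu hiv.symm
  have hilen : i ≠ p.length := by
    intro h; subst h; rw [SimpleGraph.Walk.getVert_length] at hiv; exact hwv hiv.symm
  refine ⟨p.getVert (i-1), p.getVert (i+1), ?_, ?_, ?_⟩
  · intro h
    have := getVert_injOn_isPath p hp (i-1) (by omega) (i+1) (by omega) h
    omega
  · have h1 : i - 1 < p.length := by omega
    have := p.toSubgraph_adj_getVert h1
    have h2 : i - 1 + 1 = i := by omega
    rw [h2] at this
    rw [← hiv]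
    exact this.symm
  · have h1 : i < p.length := by omega
    have := p.toSubgraph_adj_getVert h1
    rw [← hiv]
    exact this



open SimpleGraph

lemma mem_support_of_mem_edges' {u v c : V} (p : G.Walk u v) {e : Sym2 V}
    (he : e ∈ p.edges) (hc : c ∈ e) : c ∈ p.support := by
  induction e with
  | _ a b =>
    rcases Sym2.mem_iff.1 hc with rfl | rfl
    · exact p.fst_mem_support_of_mem_edges he
    · exact p.snd_mem_support_of_mem_edges he

lemma support_getLast? {a b : V} (p : G.Walk a b) : p.support.getLast? = some b := by
  rw [List.getLast?_eq_getLast (by simp), p.getLast_support]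

lemma not_leaf_of_two {v a b : V} (hab : a ≠ b) (ha : G.Adj v a) (hb : G.Adj v b) :
    (G.neighborSet v).ncard ≠ 1 := by
  intro h
  have hsub : ({a, b} : Set V) ⊆ G.neighborSet v := by
    intro x hx
    rcases hx with rfl | hx
    · exact ha
    · rw [Set.mem_singleton_iff] at hx; subst hx; exact hb
  have hle := Set.ncard_le_ncard hsub (Set.toFinite _)
  rw [Set.ncard_pair hab, h] at hle
  omega

section TreeRoot

variable (hT : G.IsTree) (r : V)

lemma support_takeUntil_prefix {u v w : V} (p : G.Walk u v) (h : w ∈ p.support) :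
    (p.takeUntil w h).support <+: p.support := by
  conv_rhs => rw [← p.take_spec h]
  rw [SimpleGraph.Walk.support_append]
  exact ⟨_, rfl⟩

lemma takeUntil_eq_pth {v w : V} (h : w ∈ (pth hT r v).support) :
    (pth hT r v).takeUntil w h = pth hT r w :=
  pth_unique hT _ ((pth_isPath hT r v).takeUntil h)

lemma pth_support_prefix_of_mem {v w : V} (h : w ∈ (pth hT r v).support) :
    (pth hT r w).support <+: (pth hT r v).support := by
  rw [← takeUntil_eq_pth hT r h]
  exact support_takeUntil_prefix _ h

lemma mem_support_of_prefix {v w : V}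
    (h : (pth hT r w).support <+: (pth hT r v).support) :
    w ∈ (pth hT r v).support :=
  h.subset ((pth hT r w).end_mem_support)

lemma edge_mem_iff_prefix {c : V} {e : Sym2 V} (hce : c ∈ e)
    (hec : e ∈ (pth hT r c).edges) (x : V) :
    e ∈ (pth hT r x).edges ↔ (pth hT r c).support <+: (pth hT r x).support := by
  constructor
  · intro hx
    exact pth_support_prefix_of_mem hT r (mem_support_of_mem_edges' _ hx hce)
  · intro hpre
    have hc : c ∈ (pth hT r x).support := mem_support_of_prefix hT r hpre
    have hsub := SimpleGraph.Walk.edges_takeUntil_subset (pth hT r x) hc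
    rw [takeUntil_eq_pth hT r hc] at hsub
    exact hsub hec

lemma exists_child {u v : V} (h : G.Adj u v) :
    s(u,v) ∈ (pth hT r u).edges ∨ s(u,v) ∈ (pth hT r v).edges := by
  by_contra hcon
  push_neg at hcon
  have h1 : ∀ e ∈ (pth hT r u).edges, e ∉ ({s(u,v)} : Set (Sym2 V)) := by
    intro e he hmem
    rw [Set.mem_singleton_iff] at hmem; subst hmem; exact hcon.1 he
  have h2 : ∀ e ∈ (pth hT r v).edges, e ∉ ({s(u,v)} : Set (Sym2 V)) := by
    intro e he hmem
    rw [Set.mem_singleton_iff] at hmem; subst hmem; exact hcon.2 he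
  set D := G.deleteEdges {s(u,v)} with hD
  let w : D.Walk u v :=
    ((pth hT r u).toDeleteEdges _ h1).reverse.append ((pth hT r v).toDeleteEdges _ h2)
  let p' := w.toPath
  have hDle : D ≤ G := SimpleGraph.deleteEdges_le _
  have hedges : ∀ e ∈ (p' : D.Walk u v).edges, e ∈ G.edgeSet := by
    intro e he
    exact (SimpleGraph.edgeSet_subset_edgeSet.2 hDle) ((p' : D.Walk u v).edges_subset_edgeSet he)
  let q : G.Walk u v := (p' : D.Walk u v).transfer G hedges
  have hq : q.IsPath := (p'.2).transfer hedges
  have hnoe : s(u,v) ∉ q.edges := by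
    rw [SimpleGraph.Walk.edges_transfer]
    intro hcontra
    have hDe := (p' : D.Walk u v).edges_subset_edgeSet hcontra
    rw [hD, SimpleGraph.edgeSet_deleteEdges] at hDe
    exact hDe.2 rfl
  have hq2 : (SimpleGraph.Walk.cons h SimpleGraph.Walk.nil).IsPath := by
    rw [SimpleGraph.Walk.cons_isPath_iff]
    exact ⟨SimpleGraph.Walk.IsPath.nil, by simp [h.ne]⟩
  have heq : q = SimpleGraph.Walk.cons h SimpleGraph.Walk.nil :=
    (pth_unique hT q hq).trans (pth_unique hT _ hq2).symm
  rw [heq] at hnoe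
  simp at hnoe

lemma not_both_child {u v : V} (h : G.Adj u v)
    (h1 : s(u,v) ∈ (pth hT r u).edges) (h2 : s(u,v) ∈ (pth hT r v).edges) : False := by
  have hu : u ∈ (pth hT r v).support := mem_support_of_mem_edges' _ h2 (by simp)
  have hv : v ∈ (pth hT r u).support := mem_support_of_mem_edges' _ h1 (by simp)
  have p1 := pth_support_prefix_of_mem hT r hu
  have p2 := pth_support_prefix_of_mem hT r hv
  have hsup : (pth hT r u).support = (pth hT r v).support :=
    List.IsPrefix.eq_of_length p1 (le_antisymm p1.length_le p2.length_le)
  have e1 := support_getLast? (pth hT r u)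
  rw [hsup, support_getLast?] at e1
  exact h.ne (Option.some_injective _ e1).symm

/-- Any path between a vertex "below" the edge `e` and a vertex "not below" passes through `e`. -/
lemma cross {e : Sym2 V} {x z : V} (hx : e ∈ (pth hT r x).edges)
    (hz : e ∉ (pth hT r z).edges) (w : G.Walk x z) (hw : w.IsPath) : e ∈ w.edges := by
  by_contra hcon
  have h1 : ∀ e' ∈ (pth hT r z).edges, e' ∉ ({e} : Set (Sym2 V)) := by
    intro e' he' hmem
    rw [Set.mem_singleton_iff] at hmem; subst hmem; exact hz he'
  have h2 : ∀ e' ∈ w.edges, e' ∉ ({e} : Set (Sym2 V)) := by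
    intro e' he' hmem
    rw [Set.mem_singleton_iff] at hmem; subst hmem; exact hcon he'
  set D := G.deleteEdges {e} with hD
  let w2 : D.Walk r x :=
    ((pth hT r z).toDeleteEdges _ h1).append (w.toDeleteEdges _ h2).reverse
  let p' := w2.toPath
  have hDle : D ≤ G := SimpleGraph.deleteEdges_le _
  have hedges : ∀ e' ∈ (p' : D.Walk r x).edges, e' ∈ G.edgeSet := fun e' he' =>
    (SimpleGraph.edgeSet_subset_edgeSet.2 hDle) ((p' : D.Walk r x).edges_subset_edgeSet he')
  let q : G.Walk r x := (p' : D.Walk r x).transfer G hedges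
  have hq : q.IsPath := (p'.2).transfer hedges
  have heq : q = pth hT r x := pth_unique hT q hq
  have : e ∈ q.edges := by rw [heq]; exact hx
  rw [SimpleGraph.Walk.edges_transfer] at this
  have hDe := (p' : D.Walk r x).edges_subset_edgeSet this
  rw [hD, SimpleGraph.edgeSet_deleteEdges] at hDe
  exact hDe.2 rfl


/-- Below every edge of the tree there is a leaf. -/
lemma exists_leaf_below {c : V} {e : Sym2 V} (hec : e ∈ (pth hT r c).edges) :
    ∃ x, (G.neighborSet x).ncard = 1 ∧ (pth hT r c).support <+: (pth hT r x).support := by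
  classical
  set T : Finset V :=
    Finset.univ.filter (fun w => (pth hT r c).support <+: (pth hT r w).support) with hTdef
  have hcT : c ∈ T := by simp [hTdef]
  obtain ⟨w₀, hw₀T, hmax⟩ := T.exists_max_image (fun w => (pth hT r w).length) ⟨c, hcT⟩
  have hw₀pre : (pth hT r c).support <+: (pth hT r w₀).support := by
    simpa [hTdef] using hw₀T
  have hlen2 : 2 ≤ (pth hT r c).support.length := by
    have h0 : (pth hT r c).length ≠ 0 := by
      intro h0
      have : (pth hT r c).edges = [] := List.length_eq_zero_iff.1 (by
        rw [SimpleGraph.Walk.length_edges]; exact h0)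
      rw [this] at hec; simp at hec
    rw [SimpleGraph.Walk.length_support]; omega
  have hw₀r : w₀ ≠ r := by
    intro h; subst h
    rw [pth_self hT w₀] at hw₀pre
    have hle := hw₀pre.length_le
    rw [SimpleGraph.Walk.support_nil] at hle
    simp only [List.length_singleton] at hle
    omega
  have hkey : ∀ z, G.Adj w₀ z →
      (pth hT r w₀).support = (pth hT r z).support ++ [w₀] := by
    intro z hz
    by_cases hzs : z ∈ (pth hT r w₀).support
    · have hq1path : ((pth hT r w₀).dropUntil z hzs).IsPath :=
        (pth_isPath hT r w₀).dropUntil hzs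
      by_cases hew : s(w₀,z) ∈ ((pth hT r w₀).dropUntil z hzs).edges
      · -- the suffix is a single edge
        obtain ⟨b, hadj', q2, hq1eq⟩ :=
          (SimpleGraph.Walk.not_nil_iff (p := (pth hT r w₀).dropUntil z hzs)).1
            (SimpleGraph.Walk.not_nil_of_ne (fun h => hz.ne h.symm))
        rw [hq1eq] at hew hq1path
        rw [SimpleGraph.Walk.edges_cons, List.mem_cons] at hew
        rcases hew with heq | hq2e
        · have hb : b = w₀ := by
            rcases Sym2.eq_iff.1 heq with ⟨hh1, hh2⟩ | ⟨hh1, hh2⟩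
            · exact absurd hh1.symm hz.ne'
            · exact hh1.symm
          subst hb
          have hq2nil : q2 = SimpleGraph.Walk.nil := by
            rw [← SimpleGraph.Walk.isPath_iff_eq_nil]
            exact hq1path.of_cons
          have hspec := SimpleGraph.Walk.take_spec _ hzs
          have hsupp := congrArg SimpleGraph.Walk.support hspec
          rw [SimpleGraph.Walk.support_append, takeUntil_eq_pth hT r hzs] at hsupp
          rw [← hsupp, hq1eq, hq2nil]
          simp
        · exfalso
          have hzq2 : z ∈ q2.support := mem_support_of_mem_edges' q2 hq2e (by simp)
          exact ((SimpleGraph.Walk.cons_isPath_iff _ _).1 hq1path).2 hzq2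
      · exfalso
        exact hT.2 _ ((SimpleGraph.Walk.cons_isCycle_iff _ hz).2 ⟨hq1path, hew⟩)
    · exfalso
      have hconc : ((pth hT r w₀).concat hz).IsPath := by
        rw [← SimpleGraph.Walk.isPath_reverse_iff, SimpleGraph.Walk.reverse_concat,
          SimpleGraph.Walk.cons_isPath_iff]
        refine ⟨(pth_isPath hT r w₀).reverse, ?_⟩
        rw [SimpleGraph.Walk.support_reverse, List.mem_reverse]
        exact hzs
      have hzeq : pth hT r z = (pth hT r w₀).concat hz := (pth_unique hT _ hconc).symm
      have hzT : z ∈ T := by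
        simp only [hTdef, Finset.mem_filter, Finset.mem_univ, true_and]
        rw [hzeq, SimpleGraph.Walk.support_concat]
        exact hw₀pre.trans ⟨[z], by simp⟩
      have hle := hmax z hzT
      rw [hzeq, SimpleGraph.Walk.length_concat] at hle
      omega
  have hnnil : ¬(pth hT r w₀).Nil :=
    SimpleGraph.Walk.not_nil_of_ne (fun h => hw₀r h.symm)
  have hlpos : 0 < (pth hT r w₀).length :=
    SimpleGraph.Walk.not_nil_iff_lt_length.1 hnnil
  have hadj0 : G.Adj ((pth hT r w₀).getVert ((pth hT r w₀).length - 1)) w₀ := by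
    have := (pth hT r w₀).adj_getVert_succ (i := (pth hT r w₀).length - 1) (by omega)
    have hsucc : (pth hT r w₀).length - 1 + 1 = (pth hT r w₀).length := by omega
    rw [hsucc, SimpleGraph.Walk.getVert_length] at this
    exact this
  set z₀ := (pth hT r w₀).getVert ((pth hT r w₀).length - 1)
  refine ⟨w₀, ?_, hw₀pre⟩
  have hsub : G.neighborSet w₀ ⊆ {z₀} := by
    intro z hzmem
    have h1 := hkey z hzmem
    have h2 := hkey z₀ hadj0.symm
    have heq2 : (pth hT r z).support ++ [w₀] = (pth hT r z₀).support ++ [w₀] :=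
      h1.symm.trans h2
    have hsup := List.append_cancel_right heq2
    have e1 := support_getLast? (pth hT r z)
    rw [hsup, support_getLast?] at e1
    exact (Option.some_injective _ e1).symm
  have hge : 1 ≤ (G.neighborSet w₀).ncard := by
    have : 0 < (G.neighborSet w₀).ncard := by
      rw [Set.ncard_pos (Set.toFinite _)]
      exact ⟨z₀, hadj0.symm⟩
    omega
  have hle' : (G.neighborSet w₀).ncard ≤ 1 := by
    have := Set.ncard_le_ncard hsub (Set.toFinite _)
    simpa using this
  omega

end TreeRoot



section MoreTree

variable (hT : G.IsTree) (r : V)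

/-- A leaf (other than endpoints) cannot be an interior vertex of a path;
in particular its root-path support is not a proper prefix of another root-path. -/
lemma leaf_not_prefix {x c : V} (hx : (G.neighborSet x).ncard = 1) (hxr : x ≠ r) (hxc : x ≠ c) :
    ¬ (pth hT r x).support <+: (pth hT r c).support := by
  intro hpre
  have hxs : x ∈ (pth hT r c).support :=
    hpre.subset ((pth hT r x).end_mem_support)
  obtain ⟨a, b, hab, ha, hb⟩ :=
    internal_two_nbrs (pth hT r c) (pth_isPath hT r c) x hxs hxr hxc
  exact not_leaf_of_two hab ha.adj_sub hb.adj_sub hx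

end MoreTree

section SupSubgraph

lemma adj_finsetSup {α : Type*} (s : Finset α) (f : α → G.Subgraph) {u w : V} :
    (s.sup f).Adj u w ↔ ∃ a ∈ s, (f a).Adj u w := by
  classical
  induction s using Finset.cons_induction with
  | empty => simp
  | cons a s ha ih =>
    rw [Finset.sup_cons, SimpleGraph.Subgraph.sup_adj, ih]
    simp

lemma verts_finsetSup {α : Type*} (s : Finset α) (f : α → G.Subgraph) {u : V} :
    u ∈ (s.sup f).verts ↔ ∃ a ∈ s, u ∈ (f a).verts := by
  classical
  induction s using Finset.cons_induction with
  | empty => simp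
  | cons a s ha ih =>
    rw [Finset.sup_cons, SimpleGraph.Subgraph.verts_sup]
    simp [ih]

lemma edgeSet_finsetSup_mem {α : Type*} {s : Finset α} {f : α → G.Subgraph} {a : α}
    (ha : a ∈ s) {e : Sym2 V} (he : e ∈ (f a).edgeSet) : e ∈ (s.sup f).edgeSet := by
  have hle : f a ≤ s.sup f := Finset.le_sup ha
  induction e with
  | _ u v => exact hle.2 he

lemma finsetSup_connected {α : Type*} {s : Finset α} (hs : s.Nonempty) (f : α → G.Subgraph)
    (x : V) (hc : ∀ a ∈ s, (f a).Connected) (hx : ∀ a ∈ s, x ∈ (f a).verts) :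
    (s.sup f).Connected := by
  classical
  revert hc hx
  induction hs using Finset.Nonempty.cons_induction with
  | singleton a =>
    intro hc hx
    simpa using hc a (by simp)
  | cons a s ha hs ih =>
    intro hc hx
    rw [Finset.sup_cons]
    refine SimpleGraph.Subgraph.connected_sup (hc a (by simp)).preconnected
      (?_ : (s.sup f).Connected).preconnected ?_
    · exact ih (fun b hb => hc b (by simp [hb])) (fun b hb => hx b (by simp [hb]))
    · refine ⟨x, ?_⟩
      rw [SimpleGraph.Subgraph.verts_inf]
      exact ⟨hx a (by simp), (verts_finsetSup s f).2
        ⟨hs.choose, hs.choose_spec, hx _ (by simp [hs.choose_spec])⟩⟩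

end SupSubgraph

end TreeCoverAux

open TreeCoverAux

/-- For every integer `d ≥ 2` and tree `T` with `ℓ ≥ 2` leaves, the
minimum number of subtrees, each with at most `d` leaves, needed to cover the edge set
of `T` is exactly `⌈ℓ/d⌉`. -/
theorem minCover_fewLeaves_subtrees {V : Type*} [Fintype V] (G : SimpleGraph V)
    (hT : G.IsTree) (d : ℕ) (hd : 2 ≤ d) (ℓ : ℕ)
    (hℓ : ℓ = {v : V | (G.neighborSet v).ncard = 1}.ncard) (hℓ2 : 2 ≤ ℓ) :
    IsLeast {k : ℕ | ∃ F : Fin k → G.Subgraph,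
        (∀ i, (F i).Connected ∧
          ({v : V | ((F i).neighborSet v).ncard = 1}.ncard ≤ d)) ∧
        (∀ e ∈ G.edgeSet, ∃ i, e ∈ (F i).edgeSet)}
      ((ℓ + d - 1) / d) := by
  classical
  letI : DecidableEq V := Classical.decEq V
  letI lo : LinearOrder V := LinearOrder.lift' (fun v => (Fintype.equivFin V v : Fin _))
    (fun a b h => by simpa using congrArg (Fintype.equivFin V).symm h)
  have hd0 : 0 < d := by omega
  -- the leaf set
  set L : Finset V := Finset.univ.filter (fun v => (G.neighborSet v).ncard = 1) with hLdef
  have hLcard : L.card = ℓ := by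
    rw [hℓ]
    have : {v : V | (G.neighborSet v).ncard = 1} = ↑L := by
      ext v; simp [hLdef]
    rw [this, Set.ncard_coe_finset]
  have hLne : L.Nonempty := Finset.card_pos.1 (by omega)
  obtain ⟨r, hrL⟩ := hLne
  -- keys and the order isomorphism
  set key : V → List V := fun v => (pth hT r v).support with hkeydef
  have hkeyinj : Function.Injective key := by
    intro a b h
    have e1 := support_getLast? (pth hT r a)
    have e2 := support_getLast? (pth hT r b)
    rw [show (pth hT r a).support = key a from rfl] at e1
    rw [show (pth hT r b).support = key b from rfl] at e2
    rw [h, e2] at e1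
    exact (Option.some_injective _ e1).symm
  set KS : Finset (List V) := L.image key with hKSdef
  have hKScard : KS.card = ℓ := by
    rw [hKSdef, Finset.card_image_of_injective _ hkeyinj, hLcard]
  set τ := KS.orderIsoOfFin hKScard with hτdef
  set vOf : Fin ℓ → V := fun j => (((τ j : List V)).getLast?).getD r with hvOfdef
  have hvOf_spec : ∀ j, vOf j ∈ L ∧ key (vOf j) = (τ j : List V) := by
    intro j
    have hmem : (τ j : List V) ∈ L.image key := (τ j).2
    obtain ⟨x, hxL, hxeq⟩ := Finset.mem_image.1 hmem
    have hlast : (key x).getLast? = some x := support_getLast? _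
    have hvx : vOf j = x := by
      rw [hvOfdef]
      simp only
      rw [← hxeq, hlast]
      rfl
    rw [hvx]
    exact ⟨hxL, hxeq⟩
  have hvOfL : ∀ j, vOf j ∈ L := fun j => (hvOf_spec j).1
  have hkeyvOf : ∀ j, key (vOf j) = (τ j : List V) := fun j => (hvOf_spec j).2
  have hvOfinj : Function.Injective vOf := by
    intro i j h
    have h2 := congrArg key h
    rw [hkeyvOf, hkeyvOf] at h2
    exact τ.injective (Subtype.ext h2)
  have hvOfleaf : ∀ j, (G.neighborSet (vOf j)).ncard = 1 := by
    intro j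
    have := hvOfL j
    rw [hLdef] at this
    simpa using this
  have hvOfmono : ∀ {i j : Fin ℓ}, i < j →
      List.Lex (· < ·) (key (vOf i)) (key (vOf j)) := by
    intro i j hij
    rw [hkeyvOf, hkeyvOf]
    exact Subtype.coe_lt_coe.2 (τ.lt_iff_lt.2 hij)
  have hvOfsurj : ∀ x ∈ L, ∃ j, vOf j = x := by
    intro x hx
    have hmem : key x ∈ KS := by rw [hKSdef]; exact Finset.mem_image_of_mem _ hx
    refine ⟨τ.symm ⟨key x, hmem⟩, ?_⟩
    have h2 := hkeyvOf (τ.symm ⟨key x, hmem⟩)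
    rw [OrderIso.apply_symm_apply] at h2
    exact hkeyinj h2
  obtain ⟨ρ, hρr⟩ := hvOfsurj r hrL
  -- arithmetic facts about k
  set k := (ℓ + d - 1) / d with hkdefn
  have hk0 : 0 < k := by
    rw [hkdefn]
    apply Nat.div_pos <;> omega
  have hkd : ℓ ≤ k * d := by
    have h1 : d * k + (ℓ + d - 1) % d = ℓ + d - 1 := by
      rw [hkdefn]; exact Nat.div_add_mod _ _
    have h2 : (ℓ + d - 1) % d < d := Nat.mod_lt _ hd0
    rw [mul_comm]
    omega
  have hkℓ : k ≤ ℓ := by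
    rw [hkdefn]
    rw [Nat.div_le_iff_le_mul_add_pred hd0]
    have := Nat.le_mul_of_pos_left ℓ hd0
    omega
  -- the groups
  set cls : ℕ → Finset (Fin ℓ) := fun i => Finset.univ.filter (fun j => (j : ℕ) % k = i)
    with hclsdef
  set img : ℕ → Finset V := fun i => (cls i).image vOf with himgdef
  set Agrp : ℕ → Finset V := fun i => if (img i).card < d then insert r (img i) else img i
    with hAgrpdef
  have himgcard : ∀ i, (img i).card =
      ((Finset.range ℓ).filter (fun j => j % k = i)).card := by
    intro i
    rw [himgdef]
    simp only
    rw [Finset.card_image_of_injective _ hvOfinj]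
    refine Finset.card_bij (fun j _ => (j : ℕ)) ?_ ?_ ?_
    · intro j hj
      simp only [hclsdef, Finset.mem_filter, Finset.mem_univ, true_and] at hj
      simp [j.2, hj]
    · intro j1 _ j2 _ h
      exact Fin.ext h
    · intro n hn
      simp only [Finset.mem_filter, Finset.mem_range] at hn
      exact ⟨⟨n, hn.1⟩, by simp [hclsdef, hn.2], rfl⟩
  have hAcard : ∀ i, (Agrp i).card ≤ d := by
    intro i
    rw [hAgrpdef]
    simp only
    split_ifs with h
    · have := Finset.card_insert_le r (img i)
      omega
    · rw [himgcard]
      exact class_card_le hk0 hkd i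
  have himgsub : ∀ i, img i ⊆ Agrp i := by
    intro i
    rw [hAgrpdef]
    simp only
    split_ifs
    · exact Finset.subset_insert _ _
    · exact subset_rfl
  have hAne : ∀ i, i < k → (Agrp i).Nonempty := by
    intro i hik
    have hmem : (⟨i, lt_of_lt_of_le hik hkℓ⟩ : Fin ℓ) ∈ cls i := by
      simp [hclsdef, Nat.mod_eq_of_lt hik]
    exact ⟨vOf _, himgsub i (Finset.mem_image_of_mem _ hmem)⟩
  set xbase : ℕ → V := fun i => if h : (Agrp i).Nonempty then h.choose else r with hxbasedef
  have hxbaseA : ∀ i, i < k → xbase i ∈ Agrp i := by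
    intro i hik
    rw [hxbasedef]
    simp only
    rw [dif_pos (hAne i hik)]
    exact (hAne i hik).choose_spec
  -- the covering family
  set F : Fin k → G.Subgraph :=
    fun i => (Agrp i.val).sup (fun a => (pth hT (xbase i.val) a).toSubgraph) with hFdef
  constructor
  · -- membership
    refine ⟨F, ?_, ?_⟩
    · intro i
      constructor
      · refine finsetSup_connected (hAne i.val i.2) _ (xbase i.val) ?_ ?_
        · intro a _
          exact SimpleGraph.Walk.toSubgraph_connected _
        · intro a _
          exact (pth hT (xbase i.val) a).start_mem_verts_toSubgraph
      · have hsub : {v : V | ((F i).neighborSet v).ncard = 1} ⊆ ↑(Agrp i.val) := by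
          intro w hw
          simp only [Set.mem_setOf_eq] at hw
          by_contra hwA
          have hpos : ((F i).neighborSet w).Nonempty := by
            apply Set.nonempty_of_ncard_ne_zero
            omega
          obtain ⟨y, hy⟩ := hpos
          have hy' : (F i).Adj w y := hy
          rw [hFdef] at hy'
          obtain ⟨a, haA, hadj'⟩ := (adj_finsetSup _ _).1 hy'
          have hws : w ∈ (pth hT (xbase i.val) a).support := by
            rw [← SimpleGraph.Walk.mem_verts_toSubgraph]
            exact hadj'.fst_mem
          have hw1 : w ≠ xbase i.val := fun h => hwA (by
            rw [h]; exact Finset.mem_coe.2 (hxbaseA i.val i.2))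
          have hw2 : w ≠ a := fun h => hwA (by rw [h]; exact Finset.mem_coe.2 haA)
          obtain ⟨b1, b2, hb12, hb1, hb2⟩ :=
            internal_two_nbrs _ (pth_isPath hT (xbase i.val) a) w hws hw1 hw2
          have hle : (pth hT (xbase i.val) a).toSubgraph ≤ F i := by
            rw [hFdef]
            exact Finset.le_sup (f := fun a => (pth hT (xbase i.val) a).toSubgraph) haA
          have hss : ({b1, b2} : Set V) ⊆ (F i).neighborSet w := by
            intro t ht
            rcases ht with rfl | ht
            · exact hle.2 hb1
            · rw [Set.mem_singleton_iff] at ht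
              subst ht
              exact hle.2 hb2
          have hcard2 := Set.ncard_le_ncard hss (Set.toFinite _)
          rw [Set.ncard_pair hb12, hw] at hcard2
          omega
        calc {v : V | ((F i).neighborSet v).ncard = 1}.ncard
            ≤ (↑(Agrp i.val) : Set V).ncard := Set.ncard_le_ncard hsub (Set.toFinite _)
          _ = (Agrp i.val).card := Set.ncard_coe_finset _
          _ ≤ d := hAcard i.val
    · -- every edge is covered
      intro e he
      induction e with
      | _ u v =>
      have hadj : G.Adj u v := he
      obtain ⟨c, hce, hec⟩ : ∃ c, c ∈ s(u,v) ∧ s(u,v) ∈ (pth hT r c).edges := by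
        rcases exists_child hT r hadj with h | h
        · exact ⟨u, by simp, h⟩
        · exact ⟨v, by simp, h⟩
      set I : Set ℕ := {n | ∃ hn : n < ℓ, s(u,v) ∈ (pth hT r (vOf ⟨n, hn⟩)).edges} with hIdef
      have hIb : ∀ j ∈ I, j < ℓ := by
        rintro j ⟨hj, _⟩
        exact hj
      -- nonempty
      obtain ⟨x, hxleaf, hxpre⟩ := exists_leaf_below hT r hec
      have hxL : x ∈ L := by
        rw [hLdef]
        simp only [Finset.mem_filter, Finset.mem_univ, true_and]
        exact hxleaf
      obtain ⟨j0, hj0⟩ := hvOfsurj x hxL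
      have hj0I : (j0 : ℕ) ∈ I := by
        refine ⟨j0.2, ?_⟩
        rw [Fin.eta, hj0]
        exact (edge_mem_iff_prefix hT r hce hec x).2 hxpre
      -- root position is not in I
      have hρI : (ρ : ℕ) ∉ I := by
        rintro ⟨hn, hmem⟩
        rw [Fin.eta, hρr, pth_self] at hmem
        simp at hmem
      -- interval property
      have hint : ∀ p q s, p ∈ I → s ∈ I → p ≤ q → q ≤ s → q ∈ I := by
        rintro p q s ⟨hp, hpe⟩ ⟨hs, hse⟩ hpq hqs
        have hq : q < ℓ := lt_of_le_of_lt hqs hs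
        refine ⟨hq, ?_⟩
        by_contra hqe
        have hpq' : p < q := lt_of_le_of_ne hpq (by
          intro h
          subst h
          exact hqe hpe)
        have hqs' : q < s := lt_of_le_of_ne hqs (by
          intro h
          subst h
          exact hqe hse)
        have hzr : vOf ⟨q, hq⟩ ≠ r := by
          intro hzr
          have h1 : List.Lex (· < ·) (key (vOf ⟨p, hp⟩)) (key (vOf ⟨q, hq⟩)) :=
            hvOfmono (show (⟨p, hp⟩ : Fin ℓ) < ⟨q, hq⟩ from hpq')
          rw [hzr] at h1
          have hkr : key r = [r] := by
            rw [hkeydef]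
            simp only
            rw [pth_self]
            rfl
          rw [hkr] at h1
          -- key (vOf p) starts with r, so Lex _ [r] is impossible
          have hcons := SimpleGraph.Walk.support_eq_cons (pth hT r (vOf ⟨p, hp⟩))
          rw [show (pth hT r (vOf ⟨p, hp⟩)).support = key (vOf ⟨p, hp⟩) from rfl] at hcons
          rw [hcons] at h1
          cases h1 with
          | cons h1 => exact List.not_lex_nil h1
          | rel h1 => exact lt_irrefl _ h1
        have hzc : vOf ⟨q, hq⟩ ≠ c := by
          intro h
          exact hqe (by rw [h]; exact hec)
        have hside1 := lex_sameside (q := (pth hT r c).support)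
          (s := key (vOf ⟨p, hp⟩)) (t := key (vOf ⟨q, hq⟩))
          ((edge_mem_iff_prefix hT r hce hec _).1 hpe)
          (fun hpre => hqe ((edge_mem_iff_prefix hT r hce hec _).2 hpre))
          (leaf_not_prefix hT r (hvOfleaf _) hzr hzc)
        have hside2 := lex_sameside (q := (pth hT r c).support)
          (s := key (vOf ⟨s, hs⟩)) (t := key (vOf ⟨q, hq⟩))
          ((edge_mem_iff_prefix hT r hce hec _).1 hse)
          (fun hpre => hqe ((edge_mem_iff_prefix hT r hce hec _).2 hpre))
          (leaf_not_prefix hT r (hvOfleaf _) hzr hzc)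
        have h1 : List.Lex (· < ·) (key (vOf ⟨p, hp⟩)) (key (vOf ⟨q, hq⟩)) :=
          hvOfmono hpq'
        have h2 : List.Lex (· < ·) (key (vOf ⟨q, hq⟩)) (key (vOf ⟨s, hs⟩)) :=
          hvOfmono hqs'
        have h3 : List.Lex (· < ·) (pth hT r c).support (key (vOf ⟨q, hq⟩)) :=
          (hside1.2).1 h1
        have h4 : List.Lex (· < ·) (key (vOf ⟨q, hq⟩)) (pth hT r c).support :=
          (hside2.1).1 h2
        exact lt_asymm (show (pth hT r c).support < key (vOf ⟨q, hq⟩) from h3)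
          (show key (vOf ⟨q, hq⟩) < (pth hT r c).support from h4)
      -- apply the splitting lemma
      obtain ⟨i, hik, ⟨a, haI, hamod⟩, houts⟩ :=
        split_lemma hd hk0 hkd I hint hIb (ρ := (ρ : ℕ)) hρI hj0I
      obtain ⟨ha_lt, hae⟩ := haI
      have hxaA : vOf ⟨a, ha_lt⟩ ∈ Agrp i := by
        apply himgsub
        rw [himgdef]
        simp only
        apply Finset.mem_image_of_mem
        simp [hclsdef, hamod]
      have hout : ∃ bv ∈ Agrp i, s(u,v) ∉ (pth hT r bv).edges := by
        rcases houts with ⟨b, hbℓ, hbmod, hbI⟩ | hρmod | hcard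
        · refine ⟨vOf ⟨b, hbℓ⟩, ?_, ?_⟩
          · apply himgsub
            rw [himgdef]
            simp only
            apply Finset.mem_image_of_mem
            simp [hclsdef, hbmod]
          · intro hmem
            exact hbI ⟨hbℓ, hmem⟩
        · refine ⟨r, ?_, ?_⟩
          · rw [← hρr]
            apply himgsub
            rw [himgdef]
            simp only
            apply Finset.mem_image_of_mem
            simp [hclsdef, hρmod]
          · rw [pth_self]
            simp
        · refine ⟨r, ?_, ?_⟩
          · rw [hAgrpdef]
            simp only
            rw [if_pos (by rw [himgcard]; exact hcard)]
            exact Finset.mem_insert_self _ _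
          · rw [pth_self]
            simp
      obtain ⟨bv, hbvA, hbv⟩ := hout
      refine ⟨⟨i, hik⟩, ?_⟩
      by_cases hbase : s(u,v) ∈ (pth hT r (xbase i)).edges
      · have hcr := cross hT r hbase hbv (pth hT (xbase i) bv) (pth_isPath hT _ _)
        rw [hFdef]
        exact edgeSet_finsetSup_mem hbvA
          ((SimpleGraph.Walk.mem_edges_toSubgraph _).2 hcr)
      · have hcr := cross hT r hae hbase ((pth hT (xbase i) (vOf ⟨a, ha_lt⟩)).reverse)
          ((pth_isPath hT _ _).reverse)
        rw [SimpleGraph.Walk.edges_reverse, List.mem_reverse] at hcr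
        rw [hFdef]
        exact edgeSet_finsetSup_mem hxaA
          ((SimpleGraph.Walk.mem_edges_toSubgraph _).2 hcr)
  · -- lower bound
    rintro k' ⟨F', hF'cond, hF'cov⟩
    have hmain : ∀ v ∈ L, ∃ i : Fin k', ((F' i).neighborSet v).ncard = 1 := by
      intro v hv
      have hvleaf : (G.neighborSet v).ncard = 1 := by simpa [hLdef] using hv
      have hvne : (G.neighborSet v).Nonempty := by
        apply Set.nonempty_of_ncard_ne_zero
        omega
      obtain ⟨w, hw⟩ := hvne
      have hwadj : G.Adj v w := hw
      obtain ⟨i, hi⟩ := hF'cov s(v, w) hwadj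
      refine ⟨i, ?_⟩
      have hFadj : (F' i).Adj v w := (SimpleGraph.Subgraph.mem_edgeSet).1 hi
      have hsing : G.neighborSet v = {w} := by
        obtain ⟨z, hz⟩ := Set.ncard_eq_one.1 hvleaf
        rw [hz] at hw ⊢
        rw [Set.mem_singleton_iff] at hw
        rw [hw]
      have hsub : (F' i).neighborSet v ⊆ {w} := by
        rw [← hsing]
        intro t ht
        exact ((F' i).adj_sub ht : G.Adj v t)
      have hsup : ({w} : Set V) ⊆ (F' i).neighborSet v := by
        intro t ht
        rw [Set.mem_singleton_iff] at ht
        subst ht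
        exact hFadj
      rw [subset_antisymm hsub hsup]
      simp
    have hk'0 : 0 < k' := by
      obtain ⟨i, _⟩ := hmain r hrL
      exact lt_of_le_of_lt (Nat.zero_le _) i.2
    set g : ↥L → Fin k' := fun x => (hmain x.1 x.2).choose with hgdef
    have hg : ∀ x : ↥L, ((F' (g x)).neighborSet x.1).ncard = 1 :=
      fun x => (hmain x.1 x.2).choose_spec
    have hsum : L.attach.card = ∑ i : Fin k', (L.attach.filter (fun x => g x = i)).card :=
      Finset.card_eq_sum_card_fiberwise (fun x _ => Finset.mem_univ (g x))
    have hfib : ∀ i : Fin k', (L.attach.filter (fun x => g x = i)).card ≤ d := by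
      intro i
      have hinj : Function.Injective (fun x : ↥L => x.1) := Subtype.val_injective
      rw [← Finset.card_image_of_injective _ hinj]
      rw [← Set.ncard_coe_finset]
      refine le_trans (Set.ncard_le_ncard ?_ (Set.toFinite _)) ((hF'cond i).2)
      intro t ht
      simp only [Finset.coe_image, Set.mem_image, Finset.mem_coe, Finset.mem_filter] at ht
      obtain ⟨x, ⟨_, hgx⟩, hxt⟩ := ht
      subst hxt
      rw [Set.mem_setOf_eq, ← hgx]
      exact hg x
    have hcount : ℓ ≤ k' * d := by
      have h1 : L.attach.card = ℓ := by rw [Finset.card_attach, hLcard]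
      have h2 : ∑ i : Fin k', (L.attach.filter (fun x => g x = i)).card
          ≤ ∑ _i : Fin k', d := Finset.sum_le_sum (fun i _ => hfib i)
      rw [Finset.sum_const, Finset.card_univ, Fintype.card_fin, smul_eq_mul] at h2
      omega
    rw [Nat.div_le_iff_le_mul_add_pred hd0]
    have : k' * d = d * k' := mul_comm _ _
    omega
end

section
/- Let f : V(G) → {2,3,4,…} be a binding function of a connected graph G, and let s be the minimum number of connected subgraphs X with deg_X(v) ≤ f(v) for all v ∈ V(X) that cover E(G). Then G has such a covering of size s in which the subgraphs are pairwise intersecting (any two share a vertex). -/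
/-- A subgraph `X` of `G` is `f`-bound if every vertex of `X` has at most `f v`
neighbours in `X`. -/
def IsFBound {V : Type*} {G : SimpleGraph V} (H : G.Subgraph) (f : V → ℕ) : Prop :=
  ∀ v ∈ H.verts, (H.neighborSet v).ncard ≤ f v

section MinCoverAuxSection

set_option linter.unusedSectionVars false
set_option maxHeartbeats 1000000

open SimpleGraph

variable {V : Type*} [Fintype V] {G : SimpleGraph V}

namespace MinCoverAux





lemma nbr_empty {H : G.Subgraph} {x : V} (hx : x ∉ H.verts) : H.neighborSet x = ∅ := by
  ext y
  simp only [SimpleGraph.Subgraph.mem_neighborSet, Set.mem_empty_iff_false, iff_false]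
  exact fun h => hx h.fst_mem

lemma nbr_mono {H K : G.Subgraph} (h : H ≤ K) (x : V) :
    H.neighborSet x ⊆ K.neighborSet x := fun _ hy => h.2 hy

lemma edge_nbr_fst {v w : V} (hvw : G.Adj v w) :
    (G.subgraphOfAdj hvw).neighborSet v = {w} := by
  ext x
  simp only [SimpleGraph.Subgraph.mem_neighborSet, subgraphOfAdj_adj, Sym2.congr_right,
    Set.mem_singleton_iff]
  exact eq_comm

lemma edge_nbr_snd {v w : V} (hvw : G.Adj v w) :
    (G.subgraphOfAdj hvw).neighborSet w = {v} := by
  ext x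
  simp only [SimpleGraph.Subgraph.mem_neighborSet, subgraphOfAdj_adj,
    show s(v, w) = s(w, v) from Sym2.eq_swap, Sym2.congr_right, Set.mem_singleton_iff]
  exact eq_comm

lemma nbr_walk_not_mem {a b x : V} (p : G.Walk a b) (hx : x ∉ p.support) :
    p.toSubgraph.neighborSet x = ∅ :=
  nbr_empty (by rwa [Walk.mem_verts_toSubgraph])

lemma nbr_path_start {a b : V} (p : G.Walk a b) (hp : p.IsPath) :
    (p.toSubgraph.neighborSet a).ncard ≤ 1 := by
  cases p with
  | nil => simp [neighborSet_singletonSubgraph]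
  | @cons _ c _ h q =>
    have hq : q.toSubgraph.neighborSet a = ∅ :=
      nbr_walk_not_mem q ((Walk.cons_isPath_iff h q).mp hp).2
    simp only [Walk.toSubgraph, Subgraph.neighborSet_sup, hq, Set.union_empty, edge_nbr_fst h,
      Set.ncard_singleton, le_refl]

lemma nbr_path_end {a b : V} (p : G.Walk a b) (hp : p.IsPath) :
    (p.toSubgraph.neighborSet b).ncard ≤ 1 := by
  have := nbr_path_start p.reverse hp.reverse
  rwa [Walk.toSubgraph_reverse] at this

lemma nbr_path_le_two {a b : V} (p : G.Walk a b) (hp : p.IsPath) (x : V) :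
    (p.toSubgraph.neighborSet x).ncard ≤ 2 := by
  induction p with
  | nil => simp [neighborSet_singletonSubgraph]
  | @cons a c b h q ih =>
    have hqp : q.IsPath := ((Walk.cons_isPath_iff h q).mp hp).1
    simp only [Walk.toSubgraph, Subgraph.neighborSet_sup]
    refine le_trans (Set.ncard_union_le _ _) ?_
    by_cases hxa : x = a
    · subst hxa
      have hq : q.toSubgraph.neighborSet x = ∅ :=
        nbr_walk_not_mem q ((Walk.cons_isPath_iff h q).mp hp).2
      rw [hq, edge_nbr_fst h]
      simp
    · by_cases hxc : x = c
      · subst hxc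
        rw [edge_nbr_snd h]
        have := nbr_path_start q hqp
        simp only [Set.ncard_singleton]
        omega
      · rw [neighborSet_subgraphOfAdj_of_ne_of_ne h hxa hxc]
        simpa using le_trans (ih hqp) (by norm_num)





/-- The connected component of `v` inside a subgraph `H`, as a subgraph. -/
def comp (H : G.Subgraph) (v : V) : G.Subgraph :=
  sSup {K | K ≤ H ∧ K.Connected ∧ v ∈ K.verts}

lemma comp_le (H : G.Subgraph) (v : V) : comp H v ≤ H :=
  sSup_le fun _ hK => hK.1

lemma mem_comp {H : G.Subgraph} {v : V} (hv : v ∈ H.verts) : v ∈ (comp H v).verts := by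
  rw [comp, Subgraph.verts_sSup]
  refine Set.mem_biUnion (?_ : G.singletonSubgraph v ∈ _) (by simp [singletonSubgraph_verts])
  exact ⟨(G.singletonSubgraph_le_iff v H).2 hv, Subgraph.singletonSubgraph_connected,
    by simp [singletonSubgraph_verts]⟩

lemma comp_connected {H : G.Subgraph} {v : V} (hv : v ∈ H.verts) : (comp H v).Connected := by
  rw [Subgraph.connected_iff_forall_exists_walk_subgraph]
  refine ⟨⟨v, mem_comp hv⟩, ?_⟩
  have key : ∀ {z : V}, z ∈ (comp H v).verts → ∃ q : G.Walk z v, q.toSubgraph ≤ comp H v := by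
    intro z hz
    rw [comp, Subgraph.verts_sSup] at hz
    simp only [Set.mem_iUnion] at hz
    obtain ⟨K, hK, hzK⟩ := hz
    obtain ⟨q, hq⟩ := ((Subgraph.connected_iff_forall_exists_walk_subgraph K).1 hK.2.1).2 hzK hK.2.2
    exact ⟨q, hq.trans (le_sSup hK)⟩
  intro x y hx hy
  obtain ⟨q1, h1⟩ := key hx
  obtain ⟨q2, h2⟩ := key hy
  refine ⟨q1.append q2.reverse, ?_⟩
  rw [Walk.toSubgraph_append, Walk.toSubgraph_reverse]
  exact sup_le h1 h2

lemma le_comp {H K : G.Subgraph} {v x : V} (hv : v ∈ H.verts) (hK : K ≤ H) (hKc : K.Connected)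
    (hx : x ∈ K.verts) (hx' : x ∈ (comp H v).verts) : K ≤ comp H v := by
  have hmem : K ⊔ comp H v ∈ {K | K ≤ H ∧ K.Connected ∧ v ∈ K.verts} := by
    refine ⟨sup_le hK (comp_le H v), Subgraph.connected_sup hKc.preconnected (comp_connected hv).preconnected ?_, ?_⟩
    · exact ⟨x, by rw [Subgraph.verts_inf]; exact ⟨hx, hx'⟩⟩
    · rw [Subgraph.verts_sup]; exact Or.inr (mem_comp hv)
  exact le_trans le_sup_left (le_sSup hmem)


lemma detach (f : V → ℕ) (hf : ∀ v, 2 ≤ f v) {X : G.Subgraph} (hXc : X.Connected)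
    (hXb : IsFBound X f) {v : V} (hv : v ∈ X.verts) :
    ∃ keep give : G.Subgraph, keep ≤ X ∧ give ≤ X ∧ keep.Connected ∧ give.Connected ∧
      v ∈ keep.verts ∧ v ∈ give.verts ∧
      (keep.neighborSet v).ncard < f v ∧ (give.neighborSet v).ncard ≤ 1 ∧
      (∀ x, (keep.neighborSet x).ncard ≤ f x) ∧
      (∀ x, x ≠ v → (give.neighborSet x).ncard ≤ f x) ∧
      X.edgeSet ⊆ keep.edgeSet ∪ give.edgeSet ∧
      X.verts.ncard ≤ keep.verts.ncard + (give.verts \ {v}).ncard := by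
  have hXb' : ∀ x, (X.neighborSet x).ncard ≤ f x := by
    intro x
    by_cases hx : x ∈ X.verts
    · exact hXb x hx
    · rw [nbr_empty hx]; simp
  by_cases hsat : (X.neighborSet v).ncard < f v
  · -- unsaturated: keep everything, give a single vertex
    refine ⟨X, G.singletonSubgraph v, le_refl X, (G.singletonSubgraph_le_iff v X).2 hv, hXc,
      Subgraph.singletonSubgraph_connected, hv, by simp [singletonSubgraph_verts], hsat,
      by simp [neighborSet_singletonSubgraph], hXb', ?_, fun e he => Or.inl he, ?_⟩
    · intro x _; simp [neighborSet_singletonSubgraph]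
    · simp [singletonSubgraph_verts]
  · -- saturated
    push_neg at hsat
    have hne : (X.neighborSet v).Nonempty :=
      Set.nonempty_of_ncard_ne_zero (by have := hf v; omega)
    obtain ⟨u, hu⟩ := hne
    have hadj : X.Adj v u := hu
    set X' := X.deleteEdges {s(v, u)} with hX'def
    have hX'le : X' ≤ X := X.deleteEdges_le _
    have hX'verts : X'.verts = X.verts := X.deleteEdges_verts _
    have hvX' : v ∈ X'.verts := by rw [hX'verts]; exact hv
    have huX' : u ∈ X'.verts := by rw [hX'verts]; exact hadj.snd_mem
    set Cv := comp X' v with hCvdef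
    set Cu := comp X' u with hCudef
    -- single edges of X other than s(v,u) embed into X'
    have edge_le : ∀ {a b : V} (hab : X.Adj a b), s(a, b) ≠ s(v, u) →
        G.subgraphOfAdj hab.adj_sub ≤ X' := by
      intro a b hab hne
      constructor
      · intro x hx
        rw [hX'verts]
        rcases hx with rfl | hx
        · exact hab.fst_mem
        · rw [Set.mem_singleton_iff] at hx; subst hx; exact hab.snd_mem
      · intro x y hxy
        rw [subgraphOfAdj_adj] at hxy
        rw [Subgraph.deleteEdges_adj]
        rcases Sym2.eq_iff.mp hxy with ⟨rfl, rfl⟩ | ⟨rfl, rfl⟩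
        · exact ⟨hab, by rwa [Set.mem_singleton_iff]⟩
        · exact ⟨hab.symm, by rw [Set.mem_singleton_iff, Sym2.eq_swap]; exact hne⟩
    -- closure of the union of the two components under X-adjacency
    have hcl : ∀ a b : V, X.Adj a b → a ∈ Cv.verts ∪ Cu.verts → b ∈ Cv.verts ∪ Cu.verts := by
      intro a b hab ha
      by_cases he : s(a, b) = s(v, u)
      · rcases Sym2.eq_iff.mp he with ⟨rfl, rfl⟩ | ⟨rfl, rfl⟩
        · exact Or.inr (mem_comp huX')
        · exact Or.inl (mem_comp hvX')
      · have hE := edge_le hab he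
        have haE : a ∈ (G.subgraphOfAdj hab.adj_sub).verts := by simp
        have hbE : b ∈ (G.subgraphOfAdj hab.adj_sub).verts := by simp
        rcases ha with ha | ha
        · exact Or.inl ((le_comp hvX' hE (Subgraph.subgraphOfAdj_connected _) haE ha).1 hbE)
        · exact Or.inr ((le_comp huX' hE (Subgraph.subgraphOfAdj_connected _) haE ha).1 hbE)
    have habs : ∀ {x y : V} (p : G.Walk x y), p.toSubgraph ≤ X →
        x ∈ Cv.verts ∪ Cu.verts → y ∈ Cv.verts ∪ Cu.verts := by
      intro x y p
      induction p with
      | nil => exact fun _ h => h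
      | cons h q ih =>
        intro hle hx
        simp only [Walk.toSubgraph] at hle
        have h1 : X.Adj _ _ := (le_trans le_sup_left hle).2 (by rw [subgraphOfAdj_adj])
        exact ih (le_trans le_sup_right hle) (hcl _ _ h1 hx)
    have hverts_S : ∀ x ∈ X.verts, x ∈ Cv.verts ∪ Cu.verts := by
      intro x hx
      obtain ⟨p, hp⟩ := ((Subgraph.connected_iff_forall_exists_walk_subgraph X).1 hXc).2 hv hx
      exact habs p hp (Or.inl (mem_comp hvX'))
    have hedges_S : ∀ a b : V, X.Adj a b → s(a, b) = s(v, u) ∨ Cv.Adj a b ∨ Cu.Adj a b := by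
      intro a b hab
      by_cases he : s(a, b) = s(v, u)
      · exact Or.inl he
      · have hE := edge_le hab he
        have haE : a ∈ (G.subgraphOfAdj hab.adj_sub).verts := by simp
        have hEadj : (G.subgraphOfAdj hab.adj_sub).Adj a b := by rw [subgraphOfAdj_adj]
        rcases hverts_S a hab.fst_mem with ha | ha
        · exact Or.inr (Or.inl ((le_comp hvX' hE (Subgraph.subgraphOfAdj_connected _) haE ha).2 hEadj))
        · exact Or.inr (Or.inr ((le_comp huX' hE (Subgraph.subgraphOfAdj_connected _) haE ha).2 hEadj))
    -- degree of v inside Cv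
    have hCv_nbr_v : Cv.neighborSet v ⊆ X.neighborSet v \ {u} := by
      intro y hy
      refine ⟨nbr_mono (le_trans (comp_le _ _) hX'le) v hy, ?_⟩
      rw [Set.mem_singleton_iff]
      rintro rfl
      have : X'.Adj v y := (comp_le X' v).2 hy
      rw [Subgraph.deleteEdges_adj] at this
      exact this.2 rfl
    have hkeepdegv : (Cv.neighborSet v).ncard < f v :=
      lt_of_le_of_lt (Set.ncard_le_ncard hCv_nbr_v)
        (lt_of_lt_of_le (Set.ncard_diff_singleton_lt_of_mem hu) (hXb' v))
    have hkeepdeg : ∀ x, (Cv.neighborSet x).ncard ≤ f x := fun x =>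
      le_trans (Set.ncard_le_ncard (nbr_mono (le_trans (comp_le _ _) hX'le) x)) (hXb' x)
    by_cases hcase : u ∈ Cv.verts
    · -- Case A : deleted edge lies on a cycle; keep = Cv (all of X except the edge)
      have hCuCv : Cu ≤ Cv :=
        le_comp hvX' (comp_le _ _) (comp_connected huX') (mem_comp huX') hcase
      refine ⟨Cv, G.subgraphOfAdj hadj.adj_sub, le_trans (comp_le _ _) hX'le,
        subgraphOfAdj_le_of_adj X hadj, comp_connected hvX', Subgraph.subgraphOfAdj_connected _,
        mem_comp hvX', by simp, hkeepdegv, by rw [edge_nbr_fst]; simp, hkeepdeg, ?_, ?_, ?_⟩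
      · intro x hx
        by_cases hxu : x = u
        · subst hxu; rw [edge_nbr_snd, Set.ncard_singleton]; exact le_trans one_le_two (hf x)
        · rw [neighborSet_subgraphOfAdj_of_ne_of_ne hadj.adj_sub hx hxu]; simp
      · intro e
        induction e using Sym2.ind with
        | _ a b =>
          intro he
          rw [Subgraph.mem_edgeSet] at he
          rcases hedges_S a b he with h | h | h
          · right
            exact Subgraph.mem_edgeSet.2 (by rw [subgraphOfAdj_adj]; exact h.symm)
          · exact Or.inl h
          · exact Or.inl (hCuCv.2 h)
      · have hsub : X.verts ⊆ Cv.verts := by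
          intro x hx
          rcases hverts_S x hx with h | h
          · exact h
          · exact hCuCv.1 h
        exact le_trans (Set.ncard_le_ncard hsub) (Nat.le_add_right _ _)
    · -- Case B : deleted edge is a bridge; give away the far component
      have hdisjC : ∀ x, x ∈ Cv.verts → x ∈ Cu.verts → False := by
        intro x h1 h2
        exact hcase ((le_comp hvX' (comp_le _ _) (comp_connected huX') h2 h1).1 (mem_comp huX'))
      have hvCu : v ∉ Cu.verts := fun h => hdisjC v (mem_comp hvX') h
      have hCu_nbr_u : Cu.neighborSet u ⊆ X.neighborSet u \ {v} := by
        intro y hy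
        refine ⟨nbr_mono (le_trans (comp_le _ _) hX'le) u hy, ?_⟩
        rw [Set.mem_singleton_iff]
        rintro rfl
        have : X'.Adj u y := (comp_le X' u).2 hy
        rw [Subgraph.deleteEdges_adj] at this
        exact this.2 (by rw [Set.mem_singleton_iff, Sym2.eq_swap])
      refine ⟨Cv, Cu ⊔ G.subgraphOfAdj hadj.adj_sub, le_trans (comp_le _ _) hX'le,
        sup_le (le_trans (comp_le _ _) hX'le) (subgraphOfAdj_le_of_adj X hadj),
        comp_connected hvX', ?_, mem_comp hvX', ?_, hkeepdegv, ?_, hkeepdeg, ?_, ?_, ?_⟩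
      · refine Subgraph.connected_sup (comp_connected huX').preconnected (Subgraph.subgraphOfAdj_connected _).preconnected ⟨u, ?_⟩
        rw [Subgraph.verts_inf]
        exact ⟨mem_comp huX', by simp⟩
      · rw [Subgraph.verts_sup]; right; simp
      · rw [Subgraph.neighborSet_sup, nbr_empty hvCu, Set.empty_union, edge_nbr_fst]; simp
      · intro x hx
        rw [Subgraph.neighborSet_sup]
        by_cases hxu : x = u
        · subst hxu
          rw [edge_nbr_snd]
          refine le_trans (Set.ncard_le_ncard (Set.union_subset
            (le_trans hCu_nbr_u (Set.diff_subset)) ?_)) (hXb' x)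
          intro y hy
          rw [Set.mem_singleton_iff] at hy
          subst hy
          exact hadj.symm
        · rw [neighborSet_subgraphOfAdj_of_ne_of_ne hadj.adj_sub hx hxu, Set.union_empty]
          exact le_trans (Set.ncard_le_ncard (nbr_mono (le_trans (comp_le _ _) hX'le) x)) (hXb' x)
      · intro e
        induction e using Sym2.ind with
        | _ a b =>
          intro he
          rw [Subgraph.mem_edgeSet] at he
          rcases hedges_S a b he with h | h | h
          · right
            exact Subgraph.mem_edgeSet.2 (Subgraph.sup_adj.2 (Or.inr
              (by rw [subgraphOfAdj_adj]; exact h.symm)))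
          · exact Or.inl h
          · right; exact Subgraph.mem_edgeSet.2 (Subgraph.sup_adj.2 (Or.inl h))
      · have hsub : X.verts ⊆ Cv.verts ∪ ((Cu ⊔ G.subgraphOfAdj hadj.adj_sub).verts \ {v}) := by
          intro x hx
          rcases hverts_S x hx with h | h
          · exact Or.inl h
          · refine Or.inr ⟨by rw [Subgraph.verts_sup]; exact Or.inl h, ?_⟩
            rw [Set.mem_singleton_iff]
            rintro rfl
            exact hvCu h
        exact le_trans (Set.ncard_le_ncard hsub) (Set.ncard_union_le _ _)


lemma assemble (f : V → ℕ) (hf : ∀ v, 2 ≤ f v) {A B : Set V} {a b : V} {K Gv : G.Subgraph}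
    (p : G.Walk a b) (hp : p.IsPath) (hdisjAB : ∀ x, x ∈ A → x ∈ B → False)
    (hKsub : K.verts ⊆ A) (hGsub : Gv.verts ⊆ B)
    (hsuppA : ∀ x ∈ p.support, x ∈ A → x = a) (hsuppB : ∀ x ∈ p.support, x ∈ B → x = b)
    (hKc : K.Connected) (hGc : Gv.Connected) (haK : a ∈ K.verts) (hbG : b ∈ Gv.verts)
    (hKdega : (K.neighborSet a).ncard < f a) (hGdegb : (Gv.neighborSet b).ncard ≤ 1)
    (hKdeg : ∀ x, (K.neighborSet x).ncard ≤ f x)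
    (hGdeg : ∀ x, x ≠ b → (Gv.neighborSet x).ncard ≤ f x) :
    (K ⊔ p.toSubgraph ⊔ Gv).Connected ∧
      (∀ x, ((K ⊔ p.toSubgraph ⊔ Gv).neighborSet x).ncard ≤ f x) := by
  have htri : ∀ (S1 S2 S3 : Set V),
      ((S1 ∪ S2) ∪ S3).ncard ≤ S1.ncard + S2.ncard + S3.ncard := fun _ _ _ =>
    le_trans (Set.ncard_union_le _ _) (Nat.add_le_add_right (Set.ncard_union_le _ _) _)
  constructor
  · refine Subgraph.connected_sup (Subgraph.connected_sup hKc.preconnected p.toSubgraph_connected.preconnected ⟨a, ?_⟩).preconnected hGc.preconnected ⟨b, ?_⟩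
    · rw [Subgraph.verts_inf]
      exact ⟨haK, p.start_mem_verts_toSubgraph⟩
    · rw [Subgraph.verts_inf, Subgraph.verts_sup]
      exact ⟨Or.inr p.end_mem_verts_toSubgraph, hbG⟩
  · intro x
    rw [Subgraph.neighborSet_sup, Subgraph.neighborSet_sup]
    refine le_trans (htri _ _ _) ?_
    by_cases hxA : x ∈ A
    · have hG0 : Gv.neighborSet x = ∅ := nbr_empty (fun h => hdisjAB x hxA (hGsub h))
      by_cases hxa : x = a
      · subst hxa
        have h2 := nbr_path_start p hp
        rw [hG0]
        simp only [Set.ncard_empty]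
        omega
      · have hP0 : p.toSubgraph.neighborSet x = ∅ :=
          nbr_walk_not_mem p (fun hs => hxa (hsuppA x hs hxA))
        rw [hG0, hP0]
        simpa using hKdeg x
    · have hK0 : K.neighborSet x = ∅ := nbr_empty (fun h => hxA (hKsub h))
      by_cases hxb : x = b
      · subst hxb
        have h2 := nbr_path_end p hp
        rw [hK0]
        simp only [Set.ncard_empty]
        have := hf x
        omega
      · by_cases hxB : x ∈ B
        · have hP0 : p.toSubgraph.neighborSet x = ∅ :=
            nbr_walk_not_mem p (fun hs => hxb (hsuppB x hs hxB))
          rw [hK0, hP0]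
          simpa using hGdeg x hxb
        · have hG0 : Gv.neighborSet x = ∅ := nbr_empty (fun h => hxB (hGsub h))
          rw [hK0, hG0]
          have h2 := nbr_path_le_two p hp x
          have := hf x
          simp only [Set.ncard_empty]
          omega


lemma exists_min_path (hG : G.Connected) {A B : Set V} (hA : A.Nonempty) (hB : B.Nonempty) :
    ∃ (a b : V) (p : G.Walk a b), a ∈ A ∧ b ∈ B ∧ p.IsPath ∧
      (∀ x ∈ p.support, x ∈ A → x = a) ∧ (∀ x ∈ p.support, x ∈ B → x = b) := by
  classical
  have hS : ∃ n : ℕ, ∃ a b : V, ∃ p : G.Walk a b, a ∈ A ∧ b ∈ B ∧ p.length = n := by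
    obtain ⟨a, ha⟩ := hA
    obtain ⟨b, hb⟩ := hB
    obtain ⟨p⟩ := hG.preconnected a b
    exact ⟨p.length, a, b, p, ha, hb, rfl⟩
  obtain ⟨a, b, p0, ha, hb, hlen⟩ := Nat.find_spec hS
  have hmin : ∀ (a' b' : V) (q : G.Walk a' b'), a' ∈ A → b' ∈ B → Nat.find hS ≤ q.length := by
    intro a' b' q ha' hb'
    exact Nat.find_min' hS ⟨a', b', q, ha', hb', rfl⟩
  set p := p0.bypass with hpdef
  have hpath := p0.bypass_isPath
  have hplen : p.length ≤ Nat.find hS := hlen ▸ p0.length_bypass_le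
  refine ⟨a, b, p, ha, hb, hpath, ?_, ?_⟩
  · intro x hx hxA
    by_contra hne
    have hq := hmin x b (p.dropUntil x hx) hxA hb
    have hsplit : (p.takeUntil x hx).length + (p.dropUntil x hx).length = p.length := by
      rw [← Walk.length_append, Walk.take_spec]
    have htake : 0 < (p.takeUntil x hx).length := by
      rcases Nat.eq_zero_or_pos (p.takeUntil x hx).length with h0 | h
      · exact absurd (Walk.eq_of_length_eq_zero h0) (fun h' => hne h'.symm)
      · exact h
    omega
  · intro x hx hxB
    by_contra hne
    have hq := hmin a x (p.takeUntil x hx) ha hxB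
    have hsplit : (p.takeUntil x hx).length + (p.dropUntil x hx).length = p.length := by
      rw [← Walk.length_append, Walk.take_spec]
    have hdrop : 0 < (p.dropUntil x hx).length := by
      rcases Nat.eq_zero_or_pos (p.dropUntil x hx).length with h0 | h
      · exact absurd (Walk.eq_of_length_eq_zero h0) hne
      · exact h
    omega



lemma swap (hG : G.Connected) (f : V → ℕ) (hf : ∀ v, 2 ≤ f v) {Xi Xj : G.Subgraph}
    (hXic : Xi.Connected) (hXjc : Xj.Connected) (hXib : IsFBound Xi f) (hXjb : IsFBound Xj f)
    (hdisj : ∀ x, x ∈ Xi.verts → x ∈ Xj.verts → False) :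
    ∃ Xi' Xj' : G.Subgraph, Xi'.Connected ∧ Xj'.Connected ∧ IsFBound Xi' f ∧ IsFBound Xj' f ∧
      Xi.edgeSet ⊆ Xi'.edgeSet ∪ Xj'.edgeSet ∧ Xj.edgeSet ⊆ Xi'.edgeSet ∪ Xj'.edgeSet ∧
      Xi.verts.ncard + Xj.verts.ncard + 2 ≤ Xi'.verts.ncard + Xj'.verts.ncard := by
  obtain ⟨a, b, p, ha, hb, hp, hsA, hsB⟩ := exists_min_path hG hXic.nonempty hXjc.nonempty
  obtain ⟨Ki, Gi, hKile, hGile, hKic, hGic, haKi, haGi, hKidega, hGidega, hKideg, hGideg,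
    hiedge, hicount⟩ := detach f hf hXic hXib ha
  obtain ⟨Kj, Gj, hKjle, hGjle, hKjc, hGjc, hbKj, hbGj, hKjdegb, hGjdegb, hKjdeg, hGjdeg,
    hjedge, hjcount⟩ := detach f hf hXjc hXjb hb
  have hsA' : ∀ x ∈ p.reverse.support, x ∈ Xj.verts → x = b := fun x hx =>
    hsB x (by rwa [Walk.support_reverse, List.mem_reverse] at hx)
  have hsB' : ∀ x ∈ p.reverse.support, x ∈ Xi.verts → x = a := fun x hx =>
    hsA x (by rwa [Walk.support_reverse, List.mem_reverse] at hx)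
  have Hi := assemble f hf p hp hdisj hKile.1 hGjle.1 hsA hsB hKic hGjc haKi hbGj
    hKidega hGjdegb hKideg hGjdeg
  have Hj := assemble f hf p.reverse hp.reverse (fun x h1 h2 => hdisj x h2 h1) hKjle.1 hGile.1
    hsA' hsB' hKjc hGic hbKj haGi hKjdegb hGidega hKjdeg hGideg
  set Xi' := Ki ⊔ p.toSubgraph ⊔ Gj with hXi'def
  set Xj' := Kj ⊔ p.reverse.toSubgraph ⊔ Gi with hXj'def
  have hKile' : Ki ≤ Xi' := le_trans le_sup_left le_sup_left
  have hGjle' : Gj ≤ Xi' := le_sup_right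
  have hKjle' : Kj ≤ Xj' := le_trans le_sup_left le_sup_left
  have hGile' : Gi ≤ Xj' := le_sup_right
  refine ⟨Xi', Xj', Hi.1, Hj.1, fun x _ => Hi.2 x, fun x _ => Hj.2 x, ?_, ?_, ?_⟩
  · intro e he
    rcases hiedge he with h | h
    · exact Or.inl (Subgraph.edgeSet_mono hKile' h)
    · exact Or.inr (Subgraph.edgeSet_mono hGile' h)
  · intro e he
    rcases hjedge he with h | h
    · exact Or.inr (Subgraph.edgeSet_mono hKjle' h)
    · exact Or.inl (Subgraph.edgeSet_mono hGjle' h)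
  · have hsub1 : Ki.verts ∪ Gj.verts ⊆ Xi'.verts := by
      intro x hx
      rw [Subgraph.verts_sup, Subgraph.verts_sup]
      rcases hx with h | h
      · exact Or.inl (Or.inl h)
      · exact Or.inr h
    have hsub2 : Kj.verts ∪ Gi.verts ⊆ Xj'.verts := by
      intro x hx
      rw [Subgraph.verts_sup, Subgraph.verts_sup]
      rcases hx with h | h
      · exact Or.inl (Or.inl h)
      · exact Or.inr h
    have hd1 : Disjoint Ki.verts Gj.verts :=
      Set.disjoint_left.mpr fun {x} hx1 hx2 => hdisj x (hKile.1 hx1) (hGjle.1 hx2)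
    have hd2 : Disjoint Kj.verts Gi.verts :=
      Set.disjoint_left.mpr fun {x} hx1 hx2 => hdisj x (hGile.1 hx2) (hKjle.1 hx1)
    have hb1 : Ki.verts.ncard + Gj.verts.ncard ≤ Xi'.verts.ncard := by
      rw [← Set.ncard_union_eq hd1]
      exact Set.ncard_le_ncard hsub1
    have hb2 : Kj.verts.ncard + Gi.verts.ncard ≤ Xj'.verts.ncard := by
      rw [← Set.ncard_union_eq hd2]
      exact Set.ncard_le_ncard hsub2
    have e1 : (Gj.verts \ {b}).ncard + 1 = Gj.verts.ncard :=
      Set.ncard_diff_singleton_add_one hbGj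
    have e2 : (Gi.verts \ {a}).ncard + 1 = Gi.verts.ncard :=
      Set.ncard_diff_singleton_add_one haGi
    omega

end MinCoverAux


open MinCoverAux in
theorem minCover_pairwise_intersecting' {V : Type*} [Fintype V] (G : SimpleGraph V)
    (hG : G.Connected) (f : V → ℕ) (hf : ∀ v, 2 ≤ f v) (s : ℕ)
    (hs : IsLeast {k : ℕ | ∃ F : Fin k → G.Subgraph,
        (∀ i, (F i).Connected ∧ IsFBound (F i) f) ∧
        (∀ e ∈ G.edgeSet, ∃ i, e ∈ (F i).edgeSet)} s) :
    ∃ F : Fin s → G.Subgraph,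
      (∀ i, (F i).Connected ∧ IsFBound (F i) f) ∧
      (∀ e ∈ G.edgeSet, ∃ i, e ∈ (F i).edgeSet) ∧
      ∀ i j, ((F i).verts ∩ (F j).verts).Nonempty := by
  classical
  obtain ⟨F₀, hF₀1, hF₀2⟩ := hs.1
  by_contra hcon
  have step : ∀ F : Fin s → G.Subgraph, (∀ i, (F i).Connected ∧ IsFBound (F i) f) →
      (∀ e ∈ G.edgeSet, ∃ i, e ∈ (F i).edgeSet) →
      ∃ F' : Fin s → G.Subgraph, (∀ i, (F' i).Connected ∧ IsFBound (F' i) f) ∧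
        (∀ e ∈ G.edgeSet, ∃ i, e ∈ (F' i).edgeSet) ∧
        (∑ k, (F k).verts.ncard) + 1 ≤ ∑ k, (F' k).verts.ncard := by
    intro F h1 h2
    by_cases hp : ∀ i j, ((F i).verts ∩ (F j).verts).Nonempty
    · exact absurd ⟨F, h1, h2, hp⟩ hcon
    · push_neg at hp
      obtain ⟨i, j, hij0⟩ := hp
      have hij : i ≠ j := by
        rintro rfl
        rw [Set.inter_self] at hij0
        exact (h1 i).1.nonempty.ne_empty hij0
      have hdisj : ∀ x, x ∈ (F i).verts → x ∈ (F j).verts → False := by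
        intro x hx1 hx2
        exact Set.eq_empty_iff_forall_notMem.mp hij0 x ⟨hx1, hx2⟩
      obtain ⟨Xi', Xj', hc1, hc2, hb1, hb2, he1, he2, hcount⟩ :=
        swap hG f hf (h1 i).1 (h1 j).1 (h1 i).2 (h1 j).2 hdisj
      have hFj : Function.update (Function.update F i Xi') j Xj' j = Xj' :=
        Function.update_self _ _ _
      have hFi : Function.update (Function.update F i Xi') j Xj' i = Xi' := by
        rw [Function.update_of_ne hij, Function.update_self]
      refine ⟨Function.update (Function.update F i Xi') j Xj', ?_, ?_, ?_⟩
      · intro k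
        rcases eq_or_ne k j with rfl | hkj
        · rw [hFj]; exact ⟨hc2, hb2⟩
        · rw [Function.update_of_ne hkj]
          rcases eq_or_ne k i with rfl | hki
          · rw [Function.update_self]; exact ⟨hc1, hb1⟩
          · rw [Function.update_of_ne hki]; exact h1 k
      · intro e he
        obtain ⟨k, hk⟩ := h2 e he
        rcases eq_or_ne k i with rfl | hki
        · rcases he1 hk with h | h
          · exact ⟨k, by rw [hFi]; exact h⟩
          · exact ⟨j, by rw [hFj]; exact h⟩
        · rcases eq_or_ne k j with rfl | hkj
          · rcases he2 hk with h | h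
            · exact ⟨i, by rw [hFi]; exact h⟩
            · exact ⟨k, by rw [hFj]; exact h⟩
          · exact ⟨k, by rw [Function.update_of_ne hkj, Function.update_of_ne hki]; exact hk⟩
      · have hsplit : ∀ g : Fin s → ℕ,
            ∑ k, g k = g i + g j + ∑ k ∈ Finset.univ \ {i, j}, g k := by
          intro g
          rw [← Finset.sum_sdiff (Finset.subset_univ ({i, j} : Finset (Fin s))),
            Finset.sum_pair hij]
          ring
        rw [hsplit (fun k => (F k).verts.ncard),
          hsplit (fun k => ((Function.update (Function.update F i Xi') j Xj') k).verts.ncard)]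
        have hrest : ∑ k ∈ Finset.univ \ {i, j},
            ((Function.update (Function.update F i Xi') j Xj') k).verts.ncard
            = ∑ k ∈ Finset.univ \ {i, j}, (F k).verts.ncard := by
          refine Finset.sum_congr rfl ?_
          intro k hk
          simp only [Finset.mem_sdiff, Finset.mem_insert, Finset.mem_singleton] at hk
          push_neg at hk
          rw [Function.update_of_ne hk.2.2, Function.update_of_ne hk.2.1]
        simp only [hFi, hFj, hrest]
        omega
  have grow : ∀ n : ℕ, ∃ F : Fin s → G.Subgraph, (∀ i, (F i).Connected ∧ IsFBound (F i) f) ∧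
      (∀ e ∈ G.edgeSet, ∃ i, e ∈ (F i).edgeSet) ∧ n ≤ ∑ k, (F k).verts.ncard := by
    intro n
    induction n with
    | zero => exact ⟨F₀, hF₀1, hF₀2, Nat.zero_le _⟩
    | succ n ih =>
      obtain ⟨F, h1, h2, h3⟩ := ih
      obtain ⟨F', h1', h2', h4⟩ := step F h1 h2
      exact ⟨F', h1', h2', by omega⟩
  obtain ⟨F, h1, h2, h3⟩ := grow (s * Fintype.card V + 1)
  have hbound : ∑ k, (F k).verts.ncard ≤ s * Fintype.card V := by
    calc ∑ k, (F k).verts.ncard ≤ ∑ _k : Fin s, Fintype.card V := by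
          refine Finset.sum_le_sum fun k _ => ?_
          have := Set.ncard_le_ncard (Set.subset_univ (F k).verts) (Set.toFinite _)
          rwa [Set.ncard_univ, Nat.card_eq_fintype_card] at this
      _ = s * Fintype.card V := by
          simp [Finset.sum_const, Finset.card_univ]
  omega

end MinCoverAuxSection

/-- Let `f` be a binding function (`f v ≥ 2` everywhere) of a
connected graph `G`, and let `s` be the minimum number of connected `f`-bound
subgraphs needed to cover `E(G)`.  Then `G` has such a covering of size `s` whose
subgraphs are pairwise intersecting. -/
theorem minCover_pairwise_intersecting {V : Type*} [Fintype V] (G : SimpleGraph V)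
    (hG : G.Connected) (f : V → ℕ) (hf : ∀ v, 2 ≤ f v) (s : ℕ)
    (hs : IsLeast {k : ℕ | ∃ F : Fin k → G.Subgraph,
        (∀ i, (F i).Connected ∧ IsFBound (F i) f) ∧
        (∀ e ∈ G.edgeSet, ∃ i, e ∈ (F i).edgeSet)} s) :
    ∃ F : Fin s → G.Subgraph,
      (∀ i, (F i).Connected ∧ IsFBound (F i) f) ∧
      (∀ e ∈ G.edgeSet, ∃ i, e ∈ (F i).edgeSet) ∧
      ∀ i j, ((F i).verts ∩ (F j).verts).Nonempty :=
  minCover_pairwise_intersecting' G hG f hf s hs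
end

section
/- Define recursively ⌈x⌉⁰ := 1 and ⌈x⌉ᵏ := ⌈x · ⌈x⌉^{k−1}⌉ for real x > 0 and integer k ≥ 1. Then for all x > 0 and k ≥ 0: xᵏ ≤ ⌈x⌉ᵏ_rec ≤ ⌈x⌉ᵏ, and moreover ⌈x⌉ᵏ_rec ≤ (x^{k+1} − 1)/(x − 1) when x > 1. -/
/-- The iterated ceiling power: `⌈x⌉⁰ := 1` and `⌈x⌉ᵏ := ⌈x · ⌈x⌉^{k−1}⌉`. -/
noncomputable def iterCeil (x : ℝ) : ℕ → ℤ
  | 0 => 1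
  | k + 1 => ⌈x * (iterCeil x k : ℝ)⌉

/-- For all real `x > 0` and integers `k ≥ 0`:
`xᵏ ≤ ⌈x⌉ᵏ_rec ≤ ⌈x⌉ᵏ`, and moreover `⌈x⌉ᵏ_rec ≤ (x^{k+1} − 1)/(x − 1)` when `x > 1`. -/
theorem iterCeil_bounds (x : ℝ) (hx : 0 < x) (k : ℕ) :
    x ^ k ≤ (iterCeil x k : ℝ) ∧
    (iterCeil x k : ℝ) ≤ ((⌈x⌉ : ℝ)) ^ k ∧
    (1 < x → (iterCeil x k : ℝ) ≤ (x ^ (k + 1) - 1) / (x - 1)) := by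
  induction k with
  | zero =>
    refine ⟨by simp [iterCeil], by simp [iterCeil], fun h1 => ?_⟩
    simp only [iterCeil, Int.cast_one, pow_one]
    rw [le_div_iff₀ (by linarith)]
    simp
  | succ k ih =>
    obtain ⟨hlo, hhi, hgeo⟩ := ih
    have hc : 0 < (iterCeil x k : ℝ) := lt_of_lt_of_le (pow_pos hx k) hlo
    refine ⟨?_, ?_, ?_⟩
    · calc x ^ (k + 1) = x * x ^ k := by ring
        _ ≤ x * (iterCeil x k : ℝ) := by nlinarith
        _ ≤ _ := by exact_mod_cast Int.le_ceil _
    · show ((⌈x * (iterCeil x k : ℝ)⌉ : ℝ)) ≤ _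
      have hx' : x ≤ (⌈x⌉ : ℝ) := Int.le_ceil x
      have : x * (iterCeil x k : ℝ) ≤ (⌈x⌉ : ℝ) ^ (k + 1) := by
        calc x * (iterCeil x k : ℝ) ≤ (⌈x⌉ : ℝ) * (⌈x⌉ : ℝ) ^ k := by nlinarith
          _ = (⌈x⌉ : ℝ) ^ (k + 1) := by ring
      have := Int.ceil_le.mpr (by exact_mod_cast this : x * (iterCeil x k : ℝ) ≤ ((⌈x⌉ ^ (k+1) : ℤ) : ℝ))
      exact_mod_cast this
    · intro h1
      have hg := hgeo h1
      have hxm : 0 < x - 1 := by linarith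
      show ((⌈x * (iterCeil x k : ℝ)⌉ : ℝ)) ≤ _
      have h2 : ((⌈x * (iterCeil x k : ℝ)⌉ : ℝ)) < x * (iterCeil x k : ℝ) + 1 :=
        Int.ceil_lt_add_one _
      have h3 : x * (iterCeil x k : ℝ) ≤ x * ((x ^ (k + 1) - 1) / (x - 1)) := by nlinarith
      have h4 : x * ((x ^ (k + 1) - 1) / (x - 1)) + 1 = (x ^ (k + 1 + 1) - 1) / (x - 1) := by
        field_simp
        ring
      linarith
end

section
/- For all integers Δ ≥ d ≥ 3, every caterpillar of maximum degree at most Δ has a covering by ⌈(Δ−2)/(d−2)⌉ subtrees of maximum degree at most d; moreover, there exist infinitely many caterpillars of maximum degree at most Δ for which every covering by degree-d subtrees requires at least ⌈(Δ−2)/(d−2)⌉ subtrees. -/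
/-- A subgraph is a *degree-`d` subtree* if it is connected and every vertex has at
most `d` neighbours in it. -/
def IsDegSubtree {V : Type*} {G : SimpleGraph V} (H : G.Subgraph) (d : ℕ) : Prop :=
  H.Connected ∧ ∀ v : V, (H.neighborSet v).ncard ≤ d

/-- A *caterpillar*: a tree such that deleting all its leaves yields a path, i.e. the
set of non-leaf vertices induces a (possibly empty) connected graph of maximum
degree at most 2. -/
def IsCaterpillar {V : Type*} (G : SimpleGraph V) : Prop :=
  G.IsTree ∧
    (∀ v : V, (G.neighborSet v).ncard ≠ 1 →
      {w : V | (G.neighborSet w).ncard ≠ 1 ∧ G.Adj v w}.ncard ≤ 2) ∧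
    (∀ a b : V, (G.neighborSet a).ncard ≠ 1 → (G.neighborSet b).ncard ≠ 1 →
      Relation.ReflTransGen
        (fun x y => (G.neighborSet x).ncard ≠ 1 ∧ (G.neighborSet y).ncard ≠ 1 ∧
          G.Adj x y) a b)

set_option linter.unusedSectionVars false
set_option linter.unusedVariables false


open Finset in
lemma ceil_div_mul_ge (a b : ℕ) (hb : 0 < b) : a ≤ (a + b - 1) / b * b := by
  have h := Nat.div_add_mod (a + b - 1) b
  have h2 := Nat.mod_lt (a + b - 1) hb
  have h3 : (a + b - 1) / b * b = b * ((a + b - 1) / b) := Nat.mul_comm _ _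
  omega

lemma ceil_div_le {m k c : ℕ} (hk : 0 < k) (h : m ≤ k * c) : (m + k - 1) / k ≤ c := by
  rw [Nat.div_le_iff_le_mul_add_pred hk]; omega

open Finset in
lemma card_filter_mod_le (n k i : ℕ) (hk : 0 < k) :
    ((Finset.range n).filter (fun j => j % k = i)).card ≤ (n + k - 1) / k := by
  classical
  have : ((Finset.range n).filter (fun j => j % k = i)).card ≤
      ((Finset.range ((n + k - 1) / k)).card) := by
    apply Finset.card_le_card_of_injOn (fun j => j / k)
    · intro j hj
      simp only [mem_filter, mem_range, Finset.mem_coe, coe_filter, Set.mem_setOf_eq] at hj ⊢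
      have h2 : n ≤ (n + k - 1) / k * k := ceil_div_mul_ge n k hk
      by_contra hc
      push_neg at hc
      have h3 : (n + k - 1) / k * k ≤ j / k * k := Nat.mul_le_mul_right k hc
      have h4 := Nat.div_mul_le_self j k
      omega
    · intro a ha b hb hab
      simp only [coe_filter, Set.mem_setOf_eq, mem_range] at ha hb
      have hab' : a / k = b / k := hab
      have h1 := Nat.div_add_mod a k
      have h2 := Nat.div_add_mod b k
      rw [hab'] at h1
      omega
  simpa using this

lemma arith_bound {Δ d s m k : ℕ} (hd : 3 ≤ d) (hΔ : d ≤ Δ) (hk : 0 < k)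
    (hck : Δ - 2 ≤ k * (d - 2)) (hs : s ≤ 2) (hm : s + m ≤ Δ) :
    s + (m + k - 1) / k ≤ d := by
  have h1 : k * (d - s) = k * (d - 2) + k * (2 - s) := by
    rw [← Nat.mul_add]; congr 1; omega
  have h2 : 2 - s ≤ k * (2 - s) := Nat.le_mul_of_pos_left _ hk
  have h3 : m ≤ k * (d - s) := by omega
  have h4 := ceil_div_le hk h3
  omega

open SimpleGraph

section Part1

variable {V : Type} [Fintype V] {G : SimpleGraph V}

lemma two_leaves_adj (hG : G.Connected) {x y : V}
    (hx : (G.neighborSet x).ncard = 1) (hy : (G.neighborSet y).ncard = 1)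
    (hxy : G.Adj x y) : ∀ z : V, z = x ∨ z = y := by
  have hnx : G.neighborSet x = {y} := by
    obtain ⟨a, ha⟩ := Set.ncard_eq_one.mp hx
    have h : y ∈ G.neighborSet x := hxy
    rw [ha] at h ⊢
    simp_all
  have hny : G.neighborSet y = {x} := by
    obtain ⟨a, ha⟩ := Set.ncard_eq_one.mp hy
    have h : x ∈ G.neighborSet y := hxy.symm
    rw [ha] at h ⊢
    simp_all
  have key : ∀ (u z : V) (w : G.Walk u z), (u = x ∨ u = y) → (z = x ∨ z = y) := by
    intro u z w
    induction w with
    | nil => exact id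
    | @cons u b z h p ih =>
      rintro (rfl | rfl)
      · have hb : b ∈ G.neighborSet u := h
        rw [hnx] at hb
        exact ih (Or.inr hb)
      · have hb : b ∈ G.neighborSet u := h
        rw [hny] at hb
        exact ih (Or.inl hb)
  intro z
  obtain ⟨w⟩ := hG x z
  exact key x z w (Or.inl rfl)

/-- The subgraph consisting of all "spine" edges together with the leaf edges of
colour `i`. -/
def auxSub (G : SimpleGraph V) (S : Set V) (c : V → ℕ) (i : ℕ) : G.Subgraph where
  verts := S ∪ {x | c x = i}
  Adj x y := G.Adj x y ∧ (x ∈ S ∨ (c x = i ∧ y ∈ S)) ∧ (y ∈ S ∨ (c y = i ∧ x ∈ S))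
  adj_sub h := h.1
  edge_vert h := h.2.1.imp id And.left
  symm := ⟨fun x y h => ⟨h.1.symm, h.2.2, h.2.1⟩⟩

lemma auxSub_connected (G : SimpleGraph V) (S : Set V) (c : V → ℕ) (i : ℕ)
    (w₀ : V) (hw₀ : w₀ ∈ S)
    (hspine : ∀ x ∈ S, Relation.ReflTransGen
      (fun a b => a ∈ S ∧ b ∈ S ∧ G.Adj a b) x w₀)
    (hpend : ∀ x, c x = i → x ∉ S → ∃ y ∈ S, G.Adj x y) :
    (auxSub G S c i).Connected := by
  set H := auxSub G S c i with hH
  rw [Subgraph.connected_iff]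
  have hw₀v : w₀ ∈ H.verts := Or.inl hw₀
  have reach_spine : ∀ x (hx : x ∈ S),
      H.coe.Reachable ⟨x, Or.inl hx⟩ ⟨w₀, hw₀v⟩ := by
    intro x hx
    have h := hspine x hx
    have key : ∀ (b : V), Relation.ReflTransGen
        (fun a b => a ∈ S ∧ b ∈ S ∧ G.Adj a b) x b →
        ∀ hb : b ∈ H.verts, H.coe.Reachable ⟨x, Or.inl hx⟩ ⟨b, hb⟩ := by
      intro b h
      induction h with
      | refl => intro hb; exact Reachable.refl _
      | @tail b cc hxb hbc ih =>
        intro hcv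
        obtain ⟨hbS, hcS, hadj⟩ := hbc
        have hb := ih (Or.inl hbS)
        have hadjH : H.Adj b cc := ⟨hadj, Or.inl hbS, Or.inl hcS⟩
        have : H.coe.Adj ⟨b, Or.inl hbS⟩ ⟨cc, hcv⟩ := hadjH
        exact hb.trans this.reachable
    exact key w₀ h hw₀v
  have reach_all : ∀ x (hx : x ∈ H.verts), H.coe.Reachable ⟨x, hx⟩ ⟨w₀, hw₀v⟩ := by
    intro x hx
    by_cases hxS : x ∈ S
    · exact reach_spine x hxS
    · have hcx : c x = i := by
        rcases hx with h | h
        · exact absurd h hxS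
        · exact h
      obtain ⟨y, hyS, hadj⟩ := hpend x hcx hxS
      have hadjH : H.Adj x y := ⟨hadj, Or.inr ⟨hcx, hyS⟩, Or.inl hyS⟩
      have hstep : H.coe.Adj ⟨x, hx⟩ ⟨y, Or.inl hyS⟩ := hadjH
      exact hstep.reachable.trans (reach_spine y hyS)
  refine ⟨⟨?_⟩, ⟨w₀, hw₀v⟩⟩
  rintro ⟨a, ha⟩ ⟨b, hb⟩
  exact (reach_all a ha).trans (reach_all b hb).symm

lemma part1 (Δ d : ℕ) (hd : 3 ≤ d) (hΔ : d ≤ Δ)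
    (G : SimpleGraph V) (hc : IsCaterpillar G)
    (hdeg : ∀ v : V, (G.neighborSet v).ncard ≤ Δ) :
    ∃ F : Fin ((Δ - 2 + (d - 2) - 1) / (d - 2)) → G.Subgraph,
      (∀ i, IsDegSubtree (F i) d) ∧ (∀ e ∈ G.edgeSet, ∃ i, e ∈ (F i).edgeSet) := by
  classical
  set k := (Δ - 2 + (d - 2) - 1) / (d - 2) with hkdef
  have hdpos : 0 < d - 2 := by omega
  have hk0 : 0 < k := by
    rw [hkdef]
    exact Nat.div_pos (by omega) hdpos
  have hkc : Δ - 2 ≤ k * (d - 2) := ceil_div_mul_ge (Δ - 2) (d - 2) hdpos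
  have hGconn : G.Connected := hc.1.isConnected
  by_cases hsmall : ∀ v, (G.neighborSet v).ncard ≤ d
  · refine ⟨fun _ => ⊤, fun i => ⟨?_, ?_⟩, fun e he => ⟨⟨0, hk0⟩, ?_⟩⟩
    · rw [Subgraph.connected_iff']
      exact (Subgraph.topIso.connected_iff).mpr hGconn
    · intro v
      rw [Subgraph.neighborSet_top]
      exact hsmall v
    · rwa [Subgraph.edgeSet_top]
  push_neg at hsmall
  obtain ⟨w₀, hw₀d⟩ := hsmall
  set S : Set V := {v | (G.neighborSet v).ncard ≠ 1} with hSdef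
  have hw₀S : w₀ ∈ S := by
    simp only [hSdef, Set.mem_setOf_eq]
    omega
  have hleaf : ∀ x, x ∉ S → (G.neighborSet x).ncard = 1 := by
    intro x hx
    simpa [hSdef] using hx
  have hnotK2 : ∀ x y, G.Adj x y → x ∉ S → y ∈ S := by
    intro x y hxy hx
    by_contra hy
    have h2 := two_leaves_adj hGconn (hleaf x hx) (hleaf y hy) hxy
    have hsub : G.neighborSet w₀ ⊆ {x, y} := by
      intro z _
      rcases h2 z with rfl | rfl <;> simp
    have h3 := Set.ncard_le_ncard hsub (Set.toFinite _)
    have h4 : ({x, y} : Set V).ncard ≤ 2 :=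
      (Set.ncard_insert_le _ _).trans (by simp)
    omega
  have hexn : ∀ x, x ∉ S → ∃ y, G.neighborSet x = {y} :=
    fun x hx => Set.ncard_eq_one.mp (hleaf x hx)
  set p : V → V := fun x => if h : ∃ y, G.neighborSet x = {y} then h.choose else x
    with hpdef
  have hpx : ∀ x, x ∉ S → G.neighborSet x = {p x} := by
    intro x hx
    simp only [hpdef, dif_pos (hexn x hx)]
    exact (hexn x hx).choose_spec
  have hadjp : ∀ x, x ∉ S → G.Adj x (p x) := by
    intro x hx
    have h : p x ∈ G.neighborSet x := by rw [hpx x hx]; rfl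
    exact h
  have hpS : ∀ x, x ∉ S → p x ∈ S := fun x hx => hnotK2 x (p x) (hadjp x hx) hx
  have hpuniq : ∀ x, x ∉ S → ∀ y, G.Adj x y → y = p x := by
    intro x hx y hxy
    have h : y ∈ G.neighborSet x := hxy
    rw [hpx x hx] at h
    exact h
  set L : V → Finset V := fun v => (Set.toFinite {l | G.Adj v l ∧ l ∉ S}).toFinset
    with hLdef
  have hmemL : ∀ v x, x ∈ L v ↔ (G.Adj v x ∧ x ∉ S) := by
    intro v x
    simp [hLdef, Set.Finite.mem_toFinset]
  set en : (v : V) → {x // x ∈ L v} → Fin (L v).card :=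
    fun v x => ((Fintype.equivFin _).trans (finCongr (Fintype.card_coe _))) x
    with hendef
  have hen_inj : ∀ v, Function.Injective (en v) := by
    intro v a b hab
    simp only [hendef] at hab
    exact ((Fintype.equivFin _).trans (finCongr (Fintype.card_coe _))).injective hab
  set c : V → ℕ :=
    fun x => if h : x ∈ L (p x) then ((en (p x)) ⟨x, h⟩ : ℕ) % k else 0 with hcdef
  have hclt : ∀ x, c x < k := by
    intro x
    simp only [hcdef]
    split
    · exact Nat.mod_lt _ hk0
    · exact hk0
  have hmemLp : ∀ x, x ∉ S → x ∈ L (p x) := by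
    intro x hx
    rw [hmemL]
    exact ⟨(hadjp x hx).symm, hx⟩
  have hpv : ∀ v x, x ∈ L v → p x = v := by
    intro v x hx
    rw [hmemL] at hx
    exact (hpuniq x hx.2 v hx.1.symm).symm
  -- colour class bound
  have hclass : ∀ v (i : ℕ),
      ((L v).filter (fun x => c x = i)).card ≤ ((L v).card + k - 1) / k := by
    intro v i
    refine le_trans (Finset.card_le_card_of_injOn
      (fun x => if h : x ∈ L v then ((en v) ⟨x, h⟩ : ℕ) else 0) ?_ ?_)
      (card_filter_mod_le (L v).card k i hk0)
    · intro x hx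
      simp only [Finset.mem_coe, Finset.mem_filter] at hx
      obtain ⟨hxL, hxc⟩ := hx
      have hpxv : p x = v := hpv v x hxL
      simp only [dif_pos hxL]
      simp only [Finset.mem_coe, Finset.mem_filter, Finset.mem_range]
      refine ⟨(en v ⟨x, hxL⟩).isLt, ?_⟩
      have hxm : x ∈ L (p x) := by rw [hpxv]; exact hxL
      have hcx : c x = ((en (p x)) ⟨x, hxm⟩ : ℕ) % k := by
        simp only [hcdef, dif_pos hxm]
      rw [← hxc, hcx]
      congr 1
      subst hpxv
      rfl
    · intro a ha b hb hab
      simp only [Finset.coe_filter, Set.mem_setOf_eq] at ha hb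
      simp only [dif_pos ha.1, dif_pos hb.1] at hab
      have h2 := hen_inj v (Fin.val_injective hab)
      exact congrArg Subtype.val h2
  -- degree split
  have hsplit : ∀ v, {w | w ∈ S ∧ G.Adj v w}.ncard + (L v).card ≤ Δ := by
    intro v
    have hunion : {w | w ∈ S ∧ G.Adj v w} ∪ (L v : Set V) = G.neighborSet v := by
      ext w
      simp only [Set.mem_union, Set.mem_setOf_eq, Finset.coe_sort_coe, hLdef,
        Set.Finite.coe_toFinset, mem_neighborSet]
      constructor
      · rintro (⟨_, h⟩ | ⟨h, _⟩) <;> exact h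
      · intro h
        by_cases hw : w ∈ S
        · exact Or.inl ⟨hw, h⟩
        · exact Or.inr ⟨h, hw⟩
    have hdisj : Disjoint {w | w ∈ S ∧ G.Adj v w} (L v : Set V) := by
      rw [Set.disjoint_left]
      intro w hw hw'
      simp only [hLdef, Set.Finite.coe_toFinset, Set.mem_setOf_eq] at hw'
      exact hw'.2 hw.1
    have := Set.ncard_union_eq hdisj (Set.toFinite _) (Set.toFinite _)
    rw [hunion] at this
    rw [← Set.ncard_coe_finset (L v), ← this]
    exact hdeg v
  have hspine2 : ∀ v, v ∈ S → {w | w ∈ S ∧ G.Adj v w}.ncard ≤ 2 := by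
    intro v hv
    have := hc.2.1 v hv
    exact this
  -- the family
  refine ⟨fun i => auxSub G S c i.val, fun i => ⟨?_, ?_⟩, ?_⟩
  · -- connectivity
    apply auxSub_connected G S c i.val w₀ hw₀S
    · intro x hx
      have h := hc.2.2 x w₀ hx hw₀S
      exact Relation.ReflTransGen.mono (p := fun a b => a ∈ S ∧ b ∈ S ∧ G.Adj a b)
        (fun a b hab => ⟨hab.1, hab.2.1, hab.2.2⟩) _ _ h
    · intro x _ hxS
      exact ⟨p x, hpS x hxS, hadjp x hxS⟩
  · -- degrees
    intro v
    by_cases hv : v ∈ S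
    · have hsub : (auxSub G S c i.val).neighborSet v ⊆
          {w | w ∈ S ∧ G.Adj v w} ∪ ((L v).filter (fun x => c x = i.val) : Set V) := by
        intro w hw
        obtain ⟨hGadj, _, h3⟩ := hw
        rcases h3 with hwS | ⟨hcw, _⟩
        · exact Or.inl ⟨hwS, hGadj⟩
        · by_cases hwS : w ∈ S
          · exact Or.inl ⟨hwS, hGadj⟩
          · refine Or.inr ?_
            simp only [Finset.coe_filter, Set.mem_setOf_eq, hmemL]
            exact ⟨⟨hGadj, hwS⟩, hcw⟩
      have h1 := Set.ncard_le_ncard hsub (Set.toFinite _)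
      have h2 := Set.ncard_union_le {w | w ∈ S ∧ G.Adj v w}
        (((L v).filter (fun x => c x = i.val)) : Set V)
      rw [Set.ncard_coe_finset] at h2
      have h3 := hclass v i.val
      have h4 := hspine2 v hv
      have h5 := hsplit v
      have h6 := arith_bound hd hΔ hk0 hkc h4
        (le_trans (Nat.add_le_add_left (Nat.le_refl _) _) h5)
      calc ((auxSub G S c i.val).neighborSet v).ncard
          ≤ _ := h1
        _ ≤ _ := h2
        _ ≤ {w | w ∈ S ∧ G.Adj v w}.ncard + ((L v).card + k - 1) / k := by omega
        _ ≤ d := by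
            have := arith_bound hd hΔ hk0 hkc h4 h5
            omega
    · have hsub : (auxSub G S c i.val).neighborSet v ⊆ G.neighborSet v := by
        intro w hw
        exact hw.1
      have h1 := Set.ncard_le_ncard hsub (Set.toFinite _)
      have h2 := hleaf v hv
      exact le_trans (le_trans h1 (le_of_eq h2)) (by omega)
  · -- covering
    intro e he
    induction e with
    | _ x y =>
      rw [mem_edgeSet] at he
      by_cases hx : x ∈ S
      · by_cases hy : y ∈ S
        · exact ⟨⟨0, hk0⟩, ⟨he, Or.inl hx, Or.inl hy⟩⟩
        · exact ⟨⟨c y, hclt y⟩, ⟨he, Or.inl hx, Or.inr ⟨rfl, hx⟩⟩⟩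
      · have hy : y ∈ S := hnotK2 x y he hx
        exact ⟨⟨c x, hclt x⟩, ⟨he, Or.inr ⟨rfl, hy⟩, Or.inl hy⟩⟩

end Part1

lemma ceil_div_le' {m k c : ℕ} (hk : 0 < k) (h : m ≤ k * c) : (m + k - 1) / k ≤ c := by
  rw [Nat.div_le_iff_le_mul_add_pred hk]; omega

open SimpleGraph

namespace CatPart2

/-- The caterpillar with spine `Fin n` and `m - 1` leaves at each spine vertex. -/
def catG (n m : ℕ) [NeZero m] : SimpleGraph (Fin n × Fin m) where
  Adj x y := (x.2 = 0 ∧ y.2 = 0 ∧ (x.1.val + 1 = y.1.val ∨ y.1.val + 1 = x.1.val))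
    ∨ (x.1 = y.1 ∧ ((x.2 = 0 ∧ y.2 ≠ 0) ∨ (y.2 = 0 ∧ x.2 ≠ 0)))
  symm := by
    constructor
    rintro x y (⟨h1, h2, h3⟩ | ⟨h1, h2⟩)
    · exact Or.inl ⟨h2, h1, h3.symm⟩
    · exact Or.inr ⟨h1.symm, h2.symm⟩
  loopless := by
    constructor
    rintro x (⟨h1, h2, h3 | h3⟩ | ⟨h1, h2⟩)
    · omega
    · omega
    · rcases h2 with ⟨h2, h3⟩ | ⟨h2, h3⟩ <;> exact h3 h2

variable {n m : ℕ} [NeZero n] [NeZero m]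

lemma adj_leaf (j : Fin n) (t : Fin m) (ht : t ≠ 0) :
    (catG n m).Adj (j, 0) (j, t) := Or.inr ⟨rfl, Or.inl ⟨rfl, ht⟩⟩

lemma adj_spine {j j' : Fin n} (h : j.val + 1 = j'.val) :
    (catG n m).Adj (j, 0) (j', 0) := Or.inl ⟨rfl, rfl, Or.inl h⟩

lemma nbr_leaf (j : Fin n) (t : Fin m) (ht : t ≠ 0) :
    (catG n m).neighborSet (j, t) = {((j : Fin n), (0 : Fin m))} := by
  ext ⟨a, b⟩
  simp only [mem_neighborSet, Set.mem_singleton_iff, Prod.mk.injEq]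
  constructor
  · rintro (⟨h1, h2, h3⟩ | ⟨h1, (⟨h2, h3⟩ | ⟨h2, h3⟩)⟩)
    · exact absurd h1 ht
    · exact absurd h2 ht
    · exact ⟨h1.symm, h2⟩
  · rintro ⟨rfl, rfl⟩
    exact Or.inr ⟨rfl, Or.inr ⟨rfl, ht⟩⟩

lemma leaf_deg (j : Fin n) (t : Fin m) (ht : t ≠ 0) :
    ((catG n m).neighborSet (j, t)).ncard = 1 := by
  rw [nbr_leaf j t ht]; simp

lemma nbr_spine_mem (j : Fin n) (y : Fin n × Fin m) :
    y ∈ (catG n m).neighborSet (j, 0) ↔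
      (y.2 = 0 ∧ (j.val + 1 = y.1.val ∨ y.1.val + 1 = j.val)) ∨ (y.1 = j ∧ y.2 ≠ 0) := by
  simp only [mem_neighborSet]
  constructor
  · rintro (⟨h1, h2, h3⟩ | ⟨h1, (⟨h2, h3⟩ | ⟨h2, h3⟩)⟩)
    · exact Or.inl ⟨h2, h3⟩
    · exact Or.inr ⟨h1.symm, h3⟩
    · exact absurd rfl h3
  · rintro (⟨h1, h2⟩ | ⟨h1, h2⟩)
    · exact Or.inl ⟨rfl, h1, h2⟩
    · exact Or.inr ⟨h1.symm, Or.inl ⟨rfl, h2⟩⟩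

lemma spine_deg_le (hn : 1 ≤ n) (hm : 1 ≤ m) (j : Fin n) :
    ((catG n m).neighborSet (j, 0)).ncard ≤ m + 1 := by
  classical
  have hsub : (catG n m).neighborSet (j, 0) ⊆
      ({((⟨min (j.val + 1) (n - 1), by omega⟩ : Fin n), (0 : Fin m)),
        ((⟨j.val - 1, by omega⟩ : Fin n), (0 : Fin m))} : Set (Fin n × Fin m)) ∪
      ((fun t => ((j : Fin n), t)) '' {t : Fin m | t ≠ 0}) := by
    rintro y hy
    rw [nbr_spine_mem] at hy
    rcases hy with ⟨h1, h2 | h2⟩ | ⟨h1, h2⟩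
    · left; left
      have hlt : j.val + 1 < n := by have := y.1.isLt; omega
      have : y.1 = (⟨min (j.val + 1) (n - 1), by omega⟩ : Fin n) := by
        apply Fin.ext; simp; omega
      exact Prod.ext this h1
    · left; right
      have : y.1 = (⟨j.val - 1, by omega⟩ : Fin n) := by apply Fin.ext; simp; omega
      exact Prod.ext this h1
    · right
      exact ⟨y.2, h2, Prod.ext h1.symm rfl⟩
  have h1 := Set.ncard_le_ncard hsub (Set.toFinite _)
  have h2 := Set.ncard_union_le
      ({((⟨min (j.val + 1) (n - 1), by omega⟩ : Fin n), (0 : Fin m)),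
        ((⟨j.val - 1, by omega⟩ : Fin n), (0 : Fin m))} : Set (Fin n × Fin m))
      ((fun t => ((j : Fin n), t)) '' {t : Fin m | t ≠ 0})
  have h3 : ({((⟨min (j.val + 1) (n - 1), by omega⟩ : Fin n), (0 : Fin m)),
        ((⟨j.val - 1, by omega⟩ : Fin n), (0 : Fin m))} : Set (Fin n × Fin m)).ncard ≤ 2 :=
    (Set.ncard_insert_le _ _).trans (by simp)
  have h4 : ((fun t => ((j : Fin n), t)) '' {t : Fin m | t ≠ 0}).ncard = m - 1 := by
    rw [Set.ncard_image_of_injective _ (fun a b hab => (Prod.mk.injEq _ _ _ _).mp hab |>.2)]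
    have : {t : Fin m | t ≠ 0} = (Set.univ : Set (Fin m)) \ {0} := by
      ext t; simp
    rw [this, Set.ncard_diff (by simp), Set.ncard_univ, Nat.card_eq_fintype_card]
    simp
  omega

lemma spine_deg_ne_one (hn : 2 ≤ n) (hm : 2 ≤ m) (j : Fin n) :
    ((catG n m).neighborSet (j, 0)).ncard ≠ 1 := by
  intro h
  obtain ⟨z, hz⟩ := Set.ncard_eq_one.mp h
  have h1 : ((j : Fin n), (⟨1, by omega⟩ : Fin m)) ∈ (catG n m).neighborSet (j, 0) :=
    adj_leaf j _ (by simp [Fin.ext_iff])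
  have h2 : ∃ j' : Fin n, ((j' : Fin n), (0 : Fin m)) ∈ (catG n m).neighborSet (j, 0) := by
    by_cases hj : j.val + 1 < n
    · exact ⟨⟨j.val + 1, hj⟩, adj_spine rfl⟩
    · refine ⟨⟨j.val - 1, by omega⟩, ((catG n m).adj_symm (adj_spine ?_))⟩
      have := j.isLt
      simp only []
      omega
  obtain ⟨j', hj'⟩ := h2
  rw [hz, Set.mem_singleton_iff] at h1 hj'
  rw [← hj'] at h1
  have h3 := congrArg (fun p => (Prod.snd p).val) h1
  simp at h3

lemma ne_one_iff (hn : 2 ≤ n) (hm : 2 ≤ m) (v : Fin n × Fin m) :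
    ((catG n m).neighborSet v).ncard ≠ 1 ↔ v.2 = 0 := by
  obtain ⟨j, t⟩ := v
  by_cases ht : t = 0
  · subst ht
    simpa using spine_deg_ne_one hn hm j
  · simp only [ht, iff_false, ne_eq, not_not]
    exact leaf_deg j t ht

/-- The crossing lemma: every walk from the left of a spine boundary to its right
uses the corresponding spine edge. -/
lemma crossing (j : ℕ) (hj1 : j + 1 < n) :
    ∀ {u w : Fin n × Fin m} (p : (catG n m).Walk u w), u.1.val ≤ j → j < w.1.val →
    s(((⟨j, by omega⟩ : Fin n), (0 : Fin m)), ((⟨j + 1, hj1⟩ : Fin n), (0 : Fin m)))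
      ∈ p.edges := by
  intro u w p
  induction p with
  | nil => intro h1 h2; omega
  | @cons a b ww h q ih =>
    intro h1 h2
    rw [SimpleGraph.Walk.edges_cons]
    by_cases hb : b.1.val ≤ j
    · exact List.mem_cons_of_mem _ (ih hb h2)
    · push_neg at hb
      rcases h with ⟨ha2, hb2, hab | hab⟩ | ⟨hab, _⟩
      · have haj : a.1.val = j := by omega
        have ha : a = ((⟨j, by omega⟩ : Fin n), (0 : Fin m)) := by
          rw [Prod.ext_iff]
          exact ⟨Fin.ext (by simpa using haj), ha2⟩
        have hbv : b = ((⟨j + 1, hj1⟩ : Fin n), (0 : Fin m)) := by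
          rw [Prod.ext_iff]
          exact ⟨Fin.ext (by simp; omega), hb2⟩
        have hedge : s(((⟨j, by omega⟩ : Fin n), (0 : Fin m)),
            ((⟨j + 1, hj1⟩ : Fin n), (0 : Fin m))) = s(a, b) :=
          congrArg₂ (fun x y => s(x, y)) ha.symm hbv.symm
        rw [hedge]
        exact List.mem_cons_self
      · omega
      · rw [hab] at h1; omega

lemma leaf_walk_edge (j : Fin n) (t : Fin m) (ht : t ≠ 0) {z : Fin n × Fin m}
    (q : (catG n m).Walk (j, t) z) (hz : z ≠ (j, t)) :
    s(((j : Fin n), t), ((j : Fin n), (0 : Fin m))) ∈ q.edges := by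
  cases q with
  | nil => exact absurd rfl hz
  | @cons _ b _ h q' =>
    have hb : b ∈ (catG n m).neighborSet (j, t) := h
    rw [nbr_leaf j t ht] at hb
    rw [Set.mem_singleton_iff] at hb
    subst hb
    rw [SimpleGraph.Walk.edges_cons]
    exact List.mem_cons_self

lemma spine_reach (j j' : Fin n) : (catG n m).Reachable (j, 0) (j', 0) := by
  have key : ∀ (kk : ℕ) (a b : Fin n), a.val + kk = b.val →
      (catG n m).Reachable (a, 0) (b, 0) := by
    intro kk
    induction kk with
    | zero => intro a b hab; rw [show a = b from Fin.ext (by omega)]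
    | succ kk ih =>
      intro a b hab
      have hmid : a.val + kk < n := by have := b.isLt; omega
      exact (ih a ⟨a.val + kk, hmid⟩ rfl).trans (adj_spine (by simp; omega)).reachable
  rcases le_total j.val j'.val with h | h
  · exact key (j'.val - j.val) j j' (by omega)
  · exact (key (j.val - j'.val) j' j (by omega)).symm

lemma conn (hn : 1 ≤ n) (hm : 1 ≤ m) : (catG n m).Connected := by
  rw [connected_iff_exists_forall_reachable]
  refine ⟨((0 : Fin n), (0 : Fin m)), ?_⟩
  rintro ⟨j, t⟩
  by_cases ht : t = (0 : Fin m)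
  · subst ht; exact spine_reach _ _
  · exact (spine_reach 0 j).trans (adj_leaf j t ht).reachable

lemma acyclic : (catG n m).IsAcyclic := by
  rw [isAcyclic_iff_forall_adj_isBridge]
  intro v w hvw
  rw [isBridge_iff]
  rw [reachable_delete_edges_iff_exists_walk]
  rintro ⟨p, hp⟩
  rcases hvw with ⟨h1, h2, h3 | h3⟩ | ⟨h1, ⟨h2, h3⟩ | ⟨h2, h3⟩⟩
  · -- spine edge, v.1 + 1 = w.1
    have hj1 : v.1.val + 1 < n := by have := w.1.isLt; omega
    have := crossing v.1.val hj1 p (le_refl _) (by omega)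
    have hv : ((⟨v.1.val, by omega⟩ : Fin n), (0 : Fin m)) = v := by
      rw [Prod.ext_iff]
      exact ⟨Fin.ext (by simp), h1.symm⟩
    have hw : ((⟨v.1.val + 1, hj1⟩ : Fin n), (0 : Fin m)) = w := by
      rw [Prod.ext_iff]
      exact ⟨Fin.ext (by simp; omega), h2.symm⟩
    rw [hv, hw] at this
    exact hp this
  · -- spine edge, w.1 + 1 = v.1
    have hj1 : w.1.val + 1 < n := by have := v.1.isLt; omega
    have := crossing w.1.val hj1 p.reverse (by omega) (by omega)
    have hv : ((⟨w.1.val + 1, hj1⟩ : Fin n), (0 : Fin m)) = v := by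
      rw [Prod.ext_iff]
      exact ⟨Fin.ext (by simp; omega), h1.symm⟩
    have hw : ((⟨w.1.val, by omega⟩ : Fin n), (0 : Fin m)) = w := by
      rw [Prod.ext_iff]
      exact ⟨Fin.ext (by simp), h2.symm⟩
    rw [hv, hw] at this
    rw [SimpleGraph.Walk.edges_reverse, List.mem_reverse] at this
    exact hp (by rwa [Sym2.eq_swap] at this)
  · -- leaf edge, v spine, w leaf: v = (w.1, 0), w = (w.1, w.2)
    have hv : v = ((w.1 : Fin n), (0 : Fin m)) := Prod.ext h1 h2
    have hw : w = ((w.1 : Fin n), w.2) := rfl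
    have := leaf_walk_edge w.1 w.2 h3 p.reverse (by
      rw [hv]
      intro hc
      have := congrArg Prod.snd hc
      exact h3 this.symm)
    rw [SimpleGraph.Walk.edges_reverse, List.mem_reverse] at this
    have hedge : s(v, w) = s(((w.1 : Fin n), w.2), ((w.1 : Fin n), (0 : Fin m))) := by
      rw [Sym2.eq_swap, hv]
    apply hp
    rw [hedge]
    exact this
  · -- leaf edge, w spine, v leaf
    have hw : w = ((v.1 : Fin n), (0 : Fin m)) := Prod.ext h1.symm h2
    have := leaf_walk_edge v.1 v.2 h3 p (by
      rw [hw]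
      intro hc
      have := congrArg Prod.snd hc
      exact h3 this.symm)
    have hedge : s(v, w) = s(((v.1 : Fin n), v.2), ((v.1 : Fin n), (0 : Fin m))) := by
      rw [hw]
    apply hp
    rw [hedge]
    exact this


lemma cond2 (hn : 2 ≤ n) (hm : 2 ≤ m) (v : Fin n × Fin m)
    (hv : ((catG n m).neighborSet v).ncard ≠ 1) :
    {w : Fin n × Fin m |
      ((catG n m).neighborSet w).ncard ≠ 1 ∧ (catG n m).Adj v w}.ncard ≤ 2 := by
  have hv2 : v.2 = 0 := (ne_one_iff hn hm v).mp hv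
  have hsub : {w : Fin n × Fin m |
      ((catG n m).neighborSet w).ncard ≠ 1 ∧ (catG n m).Adj v w} ⊆
      ({((⟨min (v.1.val + 1) (n - 1), by omega⟩ : Fin n), (0 : Fin m)),
        ((⟨v.1.val - 1, by omega⟩ : Fin n), (0 : Fin m))} : Set (Fin n × Fin m)) := by
    rintro w ⟨hw1, hw2⟩
    have hw0 : w.2 = 0 := (ne_one_iff hn hm w).mp hw1
    have hvv : v = ((v.1 : Fin n), (0 : Fin m)) := Prod.ext rfl hv2
    rw [hvv] at hw2
    have hmm := (nbr_spine_mem v.1 w).mp hw2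
    rcases hmm with ⟨h1, h2 | h2⟩ | ⟨h1, h2⟩
    · refine Set.mem_insert_iff.mpr (Or.inl ?_)
      have hlt : v.1.val + 1 < n := by have := w.1.isLt; omega
      rw [Prod.ext_iff]
      exact ⟨Fin.ext (by simp; omega), hw0⟩
    · refine Set.mem_insert_iff.mpr (Or.inr ?_)
      simp only [Set.mem_singleton_iff]
      rw [Prod.ext_iff]
      exact ⟨Fin.ext (by simp; omega), hw0⟩
    · exact absurd hw0 h2
  exact (Set.ncard_le_ncard hsub (Set.toFinite _)).trans
    ((Set.ncard_insert_le _ _).trans (by simp))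

lemma cond3 (hn : 2 ≤ n) (hm : 2 ≤ m) (a b : Fin n × Fin m)
    (ha : ((catG n m).neighborSet a).ncard ≠ 1)
    (hb : ((catG n m).neighborSet b).ncard ≠ 1) :
    Relation.ReflTransGen
      (fun x y => ((catG n m).neighborSet x).ncard ≠ 1 ∧
        ((catG n m).neighborSet y).ncard ≠ 1 ∧ (catG n m).Adj x y) a b := by
  set r := fun x y : Fin n × Fin m => ((catG n m).neighborSet x).ncard ≠ 1 ∧
        ((catG n m).neighborSet y).ncard ≠ 1 ∧ (catG n m).Adj x y with hrdef
  have ha2 : a.2 = 0 := (ne_one_iff hn hm a).mp ha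
  have hb2 : b.2 = 0 := (ne_one_iff hn hm b).mp hb
  have hsymm : Symmetric r := fun x y h => ⟨h.2.1, h.1, h.2.2.symm⟩
  have key : ∀ (kk : ℕ) (x y : Fin n), x.val + kk = y.val →
      Relation.ReflTransGen r (x, 0) (y, 0) := by
    intro kk
    induction kk with
    | zero =>
      intro x y hxy
      rw [show x = y from Fin.ext (by omega)]
    | succ kk ih =>
      intro x y hxy
      have hmid : x.val + kk < n := by have := y.isLt; omega
      refine Relation.ReflTransGen.tail (ih x ⟨x.val + kk, hmid⟩ rfl) ?_
      refine ⟨(ne_one_iff hn hm _).mpr rfl, (ne_one_iff hn hm _).mpr rfl, ?_⟩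
      exact adj_spine (by simp; omega)
  have haa : a = ((a.1 : Fin n), (0 : Fin m)) := Prod.ext rfl ha2
  have hbb : b = ((b.1 : Fin n), (0 : Fin m)) := Prod.ext rfl hb2
  rw [haa, hbb]
  rcases le_total a.1.val b.1.val with h | h
  · exact key (b.1.val - a.1.val) a.1 b.1 (by omega)
  · haveI : Std.Symm r := ⟨fun a b h => hsymm h⟩
    exact Std.Symm.symm _ _ (key (a.1.val - b.1.val) b.1 a.1 (by omega))

lemma caterpillar (hn : 2 ≤ n) (hm : 2 ≤ m) : IsCaterpillar (catG n m) :=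
  ⟨⟨conn (by omega) (by omega), acyclic⟩, cond2 hn hm, cond3 hn hm⟩

lemma part2 (Δ d : ℕ) (hd : 3 ≤ d) (hΔ : d ≤ Δ) (N : ℕ) :
    ∃ (V : Type) (_ : Fintype V) (G : SimpleGraph V),
      N ≤ Fintype.card V ∧ IsCaterpillar G ∧
      (∀ v : V, (G.neighborSet v).ncard ≤ Δ) ∧
      ∀ (k : ℕ) (F : Fin k → G.Subgraph),
        (∀ i, IsDegSubtree (F i) d) →
        (∀ e ∈ G.edgeSet, ∃ i, e ∈ (F i).edgeSet) →
        (Δ - 2 + (d - 2) - 1) / (d - 2) ≤ k := by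
  classical
  set n := N + 8 * Δ + 8 with hn_eq
  set m := Δ - 1 with hm_eq
  clear_value n m
  have hn : 2 ≤ n := by omega
  have hm : 2 ≤ m := by omega
  haveI : NeZero n := ⟨by omega⟩
  haveI : NeZero m := ⟨by omega⟩
  refine ⟨Fin n × Fin m, inferInstance, catG n m, ?_, caterpillar hn hm, ?_, ?_⟩
  · rw [Fintype.card_prod, Fintype.card_fin, Fintype.card_fin]
    calc N ≤ n := by omega
      _ = n * 1 := (mul_one n).symm
      _ ≤ n * m := Nat.mul_le_mul_left n (by omega)
  · rintro ⟨j, t⟩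
    by_cases ht : t = 0
    · subst ht
      have := spine_deg_le (n := n) (m := m) (by omega) (by omega) j
      omega
    · rw [leaf_deg j t ht]; omega
  · intro k F hF hcov
    set cov : Fin k → Fin n → Finset (Fin n × Fin m) :=
      fun i j => Finset.univ.filter (fun y => y.2 ≠ 0 ∧ (F i).Adj (j, 0) y) with hcovdef
    have hcovnbr : ∀ i j, (cov i j : Set (Fin n × Fin m)) ⊆ (F i).neighborSet (j, 0) := by
      intro i j y hy
      simp only [hcovdef, Finset.coe_filter, Set.mem_setOf_eq, Finset.mem_univ, true_and] at hy
      exact hy.2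
    have hcard_le_d : ∀ i j, (cov i j).card ≤ d := by
      intro i j
      have h1 := Set.ncard_le_ncard (hcovnbr i j) (Set.toFinite _)
      rw [Set.ncard_coe_finset] at h1
      exact h1.trans ((hF i).2 _)
    have step1 : ∀ j : Fin n, m - 1 ≤ ∑ i : Fin k, (cov i j).card := by
      intro j
      have hBsub : (Finset.univ.filter (fun y : Fin n × Fin m => y.1 = j ∧ y.2 ≠ 0)) ⊆
          Finset.univ.biUnion (fun i => cov i j) := by
        intro y hy
        simp only [Finset.mem_filter, Finset.mem_univ, true_and] at hy
        obtain ⟨hy1, hy2⟩ := hy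
        have he : s(((j : Fin n), (0 : Fin m)), y) ∈ (catG n m).edgeSet := by
          rw [mem_edgeSet]
          have hyy : y = ((j : Fin n), y.2) := Prod.ext hy1 rfl
          rw [hyy]
          exact adj_leaf j y.2 hy2
        obtain ⟨i, hi⟩ := hcov _ he
        refine Finset.mem_biUnion.mpr ⟨i, Finset.mem_univ i, ?_⟩
        simp only [hcovdef, Finset.mem_filter, Finset.mem_univ, true_and]
        exact ⟨hy2, SimpleGraph.Subgraph.mem_edgeSet.mp hi⟩
      have hBcard : (Finset.univ.filter (fun y : Fin n × Fin m => y.1 = j ∧ y.2 ≠ 0)).card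
          = m - 1 := by
        have himg : (Finset.univ.filter (fun y : Fin n × Fin m => y.1 = j ∧ y.2 ≠ 0)) =
            Finset.image (fun t => ((j : Fin n), t))
              (Finset.univ.filter (fun t : Fin m => t ≠ 0)) := by
          ext y
          simp only [Finset.mem_filter, Finset.mem_univ, true_and, Finset.mem_image]
          constructor
          · rintro ⟨hy1, hy2⟩
            exact ⟨y.2, hy2, Prod.ext hy1.symm rfl⟩
          · rintro ⟨t, ht, rfl⟩
            exact ⟨rfl, ht⟩
        rw [himg, Finset.card_image_of_injective _
          (fun s t hst => ((Prod.mk.injEq _ _ _ _).mp hst).2),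
          Finset.filter_ne', Finset.card_erase_of_mem (Finset.mem_univ _),
          Finset.card_univ, Fintype.card_fin]
      calc m - 1 = _ := hBcard.symm
        _ ≤ (Finset.univ.biUnion (fun i => cov i j)).card := Finset.card_le_card hBsub
        _ ≤ ∑ i : Fin k, (cov i j).card := Finset.card_biUnion_le
    have step2 : ∀ i : Fin k, ∑ j : Fin n, (cov i j).card ≤ (d - 2) * n + 4 := by
      intro i
      set A : Finset (Fin n) := Finset.univ.filter (fun j => (cov i j).Nonempty) with hAdef
      have hsumA : ∑ j : Fin n, (cov i j).card = ∑ j ∈ A, (cov i j).card := by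
        symm
        apply Finset.sum_subset (Finset.subset_univ A)
        intro j _ hjA
        simp only [hAdef, Finset.mem_filter, Finset.mem_univ, true_and] at hjA
        rw [Finset.not_nonempty_iff_eq_empty] at hjA
        rw [hjA, Finset.card_empty]
      by_cases hA : A.Nonempty
      swap
      · rw [hsumA, Finset.not_nonempty_iff_eq_empty.mp hA]
        simp
      · have hvert : ∀ j' ∈ A, ((j' : Fin n), (0 : Fin m)) ∈ (F i).verts := by
          intro j' hj'
          simp only [hAdef, Finset.mem_filter, Finset.mem_univ, true_and] at hj'
          obtain ⟨y, hy⟩ := hj'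
          simp only [hcovdef, Finset.mem_filter, Finset.mem_univ, true_and] at hy
          exact hy.2.fst_mem
        obtain ⟨p, hple⟩ :=
          (((F i).connected_iff_forall_exists_walk_subgraph.mp (hF i).1).2)
            (hvert _ (A.min'_mem hA)) (hvert _ (A.max'_mem hA))
        have edge_in : ∀ (jj : ℕ) (hjj : jj + 1 < n),
            s(((⟨jj, by omega⟩ : Fin n), (0 : Fin m)),
              ((⟨jj + 1, hjj⟩ : Fin n), (0 : Fin m))) ∈ p.edges →
            (F i).Adj ((⟨jj, by omega⟩ : Fin n), (0 : Fin m))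
              ((⟨jj + 1, hjj⟩ : Fin n), (0 : Fin m)) := by
          intro jj hjj hmem
          have h1 := p.mem_edges_toSubgraph.mpr hmem
          rw [SimpleGraph.Subgraph.mem_edgeSet] at h1
          exact hple.2 h1
        have hinterior : ∀ j ∈ A, A.min' hA ≠ j → A.max' hA ≠ j →
            (cov i j).card ≤ d - 2 := by
          intro j hjA hmin hmax
          have hj1 : (A.min' hA).val < j.val :=
            Fin.lt_iff_val_lt_val.mp (lt_of_le_of_ne (A.min'_le j hjA) hmin)
          have hj2 : j.val < (A.max' hA).val :=
            Fin.lt_iff_val_lt_val.mp (lt_of_le_of_ne (A.le_max' j hjA) (fun h => hmax h.symm))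
          have hjn : j.val + 1 < n := by have := (A.max' hA).isLt; omega
          have hj0 : 1 ≤ j.val := by omega
          -- left spine edge
          have hle1 : (F i).Adj ((⟨j.val - 1, by omega⟩ : Fin n), (0 : Fin m))
              ((⟨j.val - 1 + 1, by omega⟩ : Fin n), (0 : Fin m)) :=
            edge_in (j.val - 1) (by omega)
              (crossing (j.val - 1) (by omega) p
                (show (A.min' hA).val ≤ j.val - 1 by omega)
                (show j.val - 1 < (A.max' hA).val by omega))
          have hle2 : (F i).Adj ((⟨j.val, by omega⟩ : Fin n), (0 : Fin m))
              ((⟨j.val + 1, hjn⟩ : Fin n), (0 : Fin m)) :=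
            edge_in j.val hjn (crossing j.val hjn p
              (show (A.min' hA).val ≤ j.val by omega)
              (show j.val < (A.max' hA).val by omega))
          have hfj1 : ((⟨j.val - 1 + 1, by omega⟩ : Fin n)) = j := Fin.ext (by simp; omega)
          have hfj2 : ((⟨j.val, by omega⟩ : Fin n)) = j := Fin.ext (by simp)
          rw [hfj1] at hle1
          rw [hfj2] at hle2
          have hnb1 : ((⟨j.val - 1, by omega⟩ : Fin n), (0 : Fin m)) ∈
              (F i).neighborSet (j, 0) := hle1.symm
          have hnb2 : ((⟨j.val + 1, hjn⟩ : Fin n), (0 : Fin m)) ∈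
              (F i).neighborSet (j, 0) := hle2
          have hsub2 : ({((⟨j.val - 1, by omega⟩ : Fin n), (0 : Fin m)),
              ((⟨j.val + 1, hjn⟩ : Fin n), (0 : Fin m))} : Set (Fin n × Fin m)) ∪
              (cov i j : Set (Fin n × Fin m)) ⊆ (F i).neighborSet (j, 0) := by
            rintro y (hy | hy)
            · rcases hy with rfl | hy
              · exact hnb1
              · rw [Set.mem_singleton_iff] at hy; subst hy; exact hnb2
            · exact hcovnbr i j hy
          have hdisj : Disjoint ({((⟨j.val - 1, by omega⟩ : Fin n), (0 : Fin m)),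
              ((⟨j.val + 1, hjn⟩ : Fin n), (0 : Fin m))} : Set (Fin n × Fin m))
              (cov i j : Set (Fin n × Fin m)) := by
            rw [Set.disjoint_left]
            rintro y (rfl | hy) hc
            · simp only [hcovdef, Finset.coe_filter, Set.mem_setOf_eq] at hc
              exact hc.2.1 rfl
            · rw [Set.mem_singleton_iff] at hy
              subst hy
              simp only [hcovdef, Finset.coe_filter, Set.mem_setOf_eq] at hc
              exact hc.2.1 rfl
          have hpair : ({((⟨j.val - 1, by omega⟩ : Fin n), (0 : Fin m)),
              ((⟨j.val + 1, hjn⟩ : Fin n), (0 : Fin m))} : Set (Fin n × Fin m)).ncard = 2 := by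
            apply Set.ncard_pair
            intro hcontra
            have h9 := congrArg (fun q => (Prod.fst q).val) hcontra
            simp at h9 <;> omega
          have hunion := Set.ncard_union_eq hdisj (Set.toFinite _) (Set.toFinite _)
          have h5 := Set.ncard_le_ncard hsub2 (Set.toFinite _)
          rw [hunion, hpair, Set.ncard_coe_finset] at h5
          have h6 := (hF i).2 ((j : Fin n), (0 : Fin m))
          omega
        rw [hsumA]
        calc ∑ j ∈ A, (cov i j).card
            ≤ ∑ j ∈ A, ((d - 2) + (if A.min' hA = j ∨ A.max' hA = j then 2 else 0)) := by
              apply Finset.sum_le_sum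
              intro j hj
              by_cases hje : A.min' hA = j ∨ A.max' hA = j
              · rw [if_pos hje]
                have := hcard_le_d i j
                omega
              · push_neg at hje
                rw [if_neg (by tauto)]
                have := hinterior j hj hje.1 hje.2
                omega
          _ = (d - 2) * A.card + ∑ j ∈ A, (if A.min' hA = j ∨ A.max' hA = j then 2 else 0) := by
              rw [Finset.sum_add_distrib, Finset.sum_const, smul_eq_mul, mul_comm]
          _ ≤ (d - 2) * n + 4 := by
              have h1 : A.card ≤ n := by
                have h2 := Finset.card_le_univ A
                rwa [Fintype.card_fin] at h2
              have h2 : ∑ j ∈ A, (if A.min' hA = j ∨ A.max' hA = j then 2 else 0) ≤ 4 := by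
                rw [← Finset.sum_filter]
                have h3 : (A.filter (fun j => A.min' hA = j ∨ A.max' hA = j)) ⊆
                    {A.min' hA, A.max' hA} := by
                  intro j hj
                  simp only [Finset.mem_filter] at hj
                  rcases hj.2 with h | h
                  · exact Finset.mem_insert.mpr (Or.inl h.symm)
                  · exact Finset.mem_insert.mpr (Or.inr (Finset.mem_singleton.mpr h.symm))
                have h4 := Finset.card_le_card h3
                have h5 : ({A.min' hA, A.max' hA} : Finset (Fin n)).card ≤ 2 :=
                  (Finset.card_insert_le _ _).trans (by simp)
                rw [Finset.sum_const, smul_eq_mul]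
                omega
              have h6 : (d - 2) * A.card ≤ (d - 2) * n := Nat.mul_le_mul_left _ h1
              omega
    have total : n * (m - 1) ≤ k * ((d - 2) * n + 4) := by
      calc n * (m - 1) = ∑ _j : Fin n, (m - 1) := by
            rw [Finset.sum_const, Finset.card_univ, Fintype.card_fin, smul_eq_mul]
        _ ≤ ∑ j : Fin n, ∑ i : Fin k, (cov i j).card :=
            Finset.sum_le_sum (fun j _ => step1 j)
        _ = ∑ i : Fin k, ∑ j : Fin n, (cov i j).card := Finset.sum_comm
        _ ≤ ∑ _i : Fin k, ((d - 2) * n + 4) := Finset.sum_le_sum (fun i _ => step2 i)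
        _ = k * ((d - 2) * n + 4) := by
            rw [Finset.sum_const, Finset.card_univ, Fintype.card_fin, smul_eq_mul]
    by_contra hcon
    push_neg at hcon
    have hkΔ : k ≤ 2 * Δ := by
      have h1 : (Δ - 2 + (d - 2) - 1) / (d - 2) ≤ Δ - 2 + (d - 2) - 1 := Nat.div_le_self _ _
      omega
    have hnk : k * (d - 2) < Δ - 2 := by
      by_contra hle
      push_neg at hle
      have h2 : Δ - 2 ≤ (d - 2) * k := by rw [Nat.mul_comm]; exact hle
      have := ceil_div_le' (show 0 < d - 2 by omega) h2
      omega
    have e2 : k * ((d - 2) * n + 4) = (k * (d - 2)) * n + 4 * k := by ring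
    have e3 : (k * (d - 2)) * n ≤ (Δ - 3) * n := Nat.mul_le_mul_right n (by omega)
    have e4 : n * (m - 1) = (Δ - 3) * n + n := by
      have h1 : m - 1 = Δ - 3 + 1 := by omega
      rw [h1]; ring
    omega

end CatPart2

/-- For all integers `Δ ≥ d ≥ 3`, every caterpillar of maximum
degree at most `Δ` has a covering by `⌈(Δ−2)/(d−2)⌉` degree-`d` subtrees; moreover
there are infinitely many caterpillars of maximum degree at most `Δ` for which every
covering by degree-`d` subtrees needs at least `⌈(Δ−2)/(d−2)⌉` subtrees. -/
theorem caterpillar_cover (Δ d : ℕ) (hd : 3 ≤ d) (hΔ : d ≤ Δ) :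
    (∀ (V : Type) [Fintype V] (G : SimpleGraph V), IsCaterpillar G →
      (∀ v : V, (G.neighborSet v).ncard ≤ Δ) →
      ∃ F : Fin ((Δ - 2 + (d - 2) - 1) / (d - 2)) → G.Subgraph,
        (∀ i, IsDegSubtree (F i) d) ∧
        (∀ e ∈ G.edgeSet, ∃ i, e ∈ (F i).edgeSet)) ∧
    (∀ N : ℕ, ∃ (V : Type) (_ : Fintype V) (G : SimpleGraph V),
      N ≤ Fintype.card V ∧ IsCaterpillar G ∧
      (∀ v : V, (G.neighborSet v).ncard ≤ Δ) ∧
      ∀ (k : ℕ) (F : Fin k → G.Subgraph),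
        (∀ i, IsDegSubtree (F i) d) →
        (∀ e ∈ G.edgeSet, ∃ i, e ∈ (F i).edgeSet) →
        (Δ - 2 + (d - 2) - 1) / (d - 2) ≤ k) := by
  constructor
  · intro V _ G hc hdeg
    exact part1 Δ d hd hΔ G hc hdeg
  · intro N
    exact CatPart2.part2 Δ d hd hΔ N
end
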